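/- arXiv:2310.01066 — 4 statements merged into one kernel-verified Lean document; each statement's English description precedes it below -/
import Mathlib

section
/- Let 𝓘 be the family of maximum feasible sets of A (extended with a_0 = 0). For I, J ∈ 𝓘, there exists a reconfiguration sequence between I and J if and only if I and J are ⊲-equivalent, i.e., the unique ⊲-minimal set of M(I) equals the unique ⊲-minimal set of M(J). -/
/-- One step of patience sorting: place index `i` (with value `a i`) on the
leftmost pile whose current top element is greater than `a i`, or start a
new pile at the right end if no such pile exists.  Each pile is a list of
indices with the head being the top (most recently placed) element. -/
def place (a : ℕ → ℕ) : List (List ℕ) → ℕ → List (List ℕ)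
  | [], i => [[i]]
  | p :: ps, i => if a i < a p.headI then (i :: p) :: ps else p :: place a ps i

/-- The (nonempty) piles obtained by patience sorting, processing the values
`a i` for `i ∈ idxs` in order. -/
def pilesOf (a : ℕ → ℕ) (idxs : List ℕ) : List (List ℕ) :=
  idxs.foldl (place a) []

/-- `I` is the index set of an increasing subsequence of `a`. -/
def Feasible (a : ℕ → ℕ) (I : Finset ℕ) : Prop :=
  ∀ i ∈ I, ∀ j ∈ I, i < j → a i < a j

/-- A maximum feasible set for the sequence `a₀ = 0, a₁, …, aₙ`:
a feasible subset of the index set `{0, 1, …, n}` of largest cardinality. -/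
def MaxFeasible (a : ℕ → ℕ) (n : ℕ) (I : Finset ℕ) : Prop :=
  I ⊆ Finset.range (n + 1) ∧ Feasible a I ∧
    ∀ J ⊆ Finset.range (n + 1), Feasible a J → J.card ≤ I.card

/-- `u` is placed strictly below `v` in one of the piles: some pile (a list of
indices whose head is the top) has `v` at an earlier position than `u`. -/
def Below (piles : List (List ℕ)) (u v : ℕ) : Prop :=
  ∃ p ∈ piles, ∃ k l : ℕ, k < l ∧ p[k]? = some v ∧ p[l]? = some u

/-- The relation `I ⊲ J` on maximum feasible sets: `I \ J = {u}`,
`J \ I = {v}`, and `a u` is placed strictly below `a v` in the same pile of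
the patience sorting of `a₀ = 0, a₁, …, aₙ`. -/
def PileLT (a : ℕ → ℕ) (n : ℕ) (I J : Finset ℕ) : Prop :=
  ∃ u v : ℕ, I \ J = {u} ∧ J \ I = {v} ∧
    Below (pilesOf a (List.range (n + 1))) u v

/-- One step of `⊲` within the family of maximum feasible sets. -/
def StepLT (a : ℕ → ℕ) (n : ℕ) (I J : Finset ℕ) : Prop :=
  MaxFeasible a n I ∧ MaxFeasible a n J ∧ PileLT a n I J

/-- `J ∈ M(I)`: membership in the lower set of `I` in the transitive closure
of `⊲` within the family of maximum feasible sets; equivalently, `M(I)` is the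
smallest family containing `I` and closed under taking `⊲`-smaller sets. -/
def InLowerSet (a : ℕ → ℕ) (n : ℕ) (J I : Finset ℕ) : Prop :=
  Relation.ReflTransGen (StepLT a n) J I

/-- `I` is `⊲`-minimal among maximum feasible sets. -/
def MinimalLT (a : ℕ → ℕ) (n : ℕ) (I : Finset ℕ) : Prop :=
  ∀ J : Finset ℕ, MaxFeasible a n J → ¬ PileLT a n J I

/-- One reconfiguration step: `J` is obtained from `I` by simultaneously
adding an element `j ∉ I` and removing an element `k ∈ I`. -/
def ReconStep (I J : Finset ℕ) : Prop :=
  ∃ j k : ℕ, j ∉ I ∧ k ∈ I ∧ J = insert j I \ {k}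

/-- `f 0, f 1, …, f ℓ` is a reconfiguration sequence of feasible sets
(subsets of the index universe `S`), each obtained from the previous one by a
single exchange step. -/
def ReconSeq (a : ℕ → ℕ) (S : Finset ℕ) (ℓ : ℕ) (f : ℕ → Finset ℕ) : Prop :=
  (∀ i ≤ ℓ, f i ⊆ S ∧ Feasible a (f i)) ∧
    ∀ i < ℓ, ReconStep (f i) (f (i + 1))


namespace Stmt10



variable (a : ℕ → ℕ)

lemma place_spec (ps : List (List ℕ)) (i : ℕ) :
    (∃ t p, ps[t]? = some p ∧ a i < a p.headI ∧
       (∀ s q, s < t → ps[s]? = some q → ¬ a i < a q.headI) ∧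
       place a ps i = ps.set t (i :: p))
    ∨ ((∀ q ∈ ps, ¬ a i < a q.headI) ∧ place a ps i = ps ++ [[i]]) := by
  induction ps with
  | nil => right; exact ⟨by intro q hq; simp at hq, by simp [place]⟩
  | cons p ps ih =>
    by_cases h : a i < a p.headI
    · left
      exact ⟨0, p, rfl, h, by intro s q hs; omega, by simp [place, h]⟩
    · rcases ih with ⟨t, q, hq, hlt, hmin, heq⟩ | ⟨hall, heq⟩
      · left
        refine ⟨t + 1, q, by simpa using hq, hlt, ?_, ?_⟩
        · intro s r hs hr
          cases s with
          | zero => simp at hr; subst hr; exact h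
          | succ s => exact hmin s r (by omega) (by simpa using hr)
        · simp [place, h, heq, List.set]
      · right
        constructor
        · intro r hr
          rcases List.mem_cons.1 hr with rfl | hr'
          · exact h
          · exact hall r hr'
        · simp [place, h, heq]

variable {α : Type*}

lemma headI_mem {p : List ℕ} (h : p ≠ []) : p.headI ∈ p := by
  cases p with
  | nil => simp at h
  | cons x xs => simp

lemma head_min {R : ℕ → ℕ → Prop} {p : List ℕ} (hp : p.Pairwise R) :
    ∀ y ∈ p, y = p.headI ∨ R p.headI y := by
  cases p with
  | nil => simp
  | cons x xs =>
    intro y hy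
    rcases List.mem_cons.1 hy with rfl | hy'
    · left; rfl
    · right; exact (List.pairwise_cons.1 hp).1 y hy'

lemma pairwise_get? {R : α → α → Prop} {l : List α} (h : l.Pairwise R) {k k' : ℕ} {x y : α}
    (hk : l[k]? = some x) (hk' : l[k']? = some y) (hkl : k < k') : R x y := by
  rw [List.getElem?_eq_some_iff] at hk hk'
  obtain ⟨h1, e1⟩ := hk
  obtain ⟨h2, e2⟩ := hk'
  have := List.pairwise_iff_getElem.1 h k k' h1 h2 hkl
  rwa [e1, e2] at this

lemma mem_iff_get? {l : List α} {x : α} : x ∈ l ↔ ∃ k : ℕ, l[k]? = some x := by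
  constructor
  · intro h
    obtain ⟨⟨k, hk⟩, e⟩ := List.mem_iff_get.1 h
    exact ⟨k, by rw [List.getElem?_eq_some_iff]; exact ⟨hk, e⟩⟩
  · rintro ⟨k, hk⟩
    exact List.mem_of_getElem? hk

lemma get?_set_cases {l : List (List ℕ)} {t : ℕ} {p : List ℕ} (ht : l[t]? = some p)
    (r : List ℕ) (s : ℕ) : (l.set t r)[s]? = if s = t then some r else l[s]? := by
  split
  · next h =>
      subst h
      rw [List.getElem?_set_self', ht]; rfl
  · next h => exact List.getElem?_set_ne (fun e => h e.symm)

structure PInv (a : ℕ → ℕ) (m : ℕ) (ps : List (List ℕ)) : Prop where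
  nonnil : ∀ p ∈ ps, p ≠ []
  mem_lt : ∀ p ∈ ps, ∀ x ∈ p, x < m
  cover : ∀ x < m, ∃ (t : ℕ) (p : List ℕ), ps[t]? = some p ∧ x ∈ p
  uniq : ∀ (s t : ℕ) p q x, ps[s]? = some p → ps[t]? = some q → x ∈ p → x ∈ q → s = t
  inpile : ∀ p ∈ ps, p.Pairwise (fun x y => y < x ∧ a x < a y)
  cross : ∀ (s t : ℕ) (p q : List ℕ), ps[s]? = some p → ps[t]? = some q → s ≤ t →
      ∀ x ∈ q, ∀ j ∈ p, x < j → a j < a x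
  steps : ∀ (t : ℕ) (p q : List ℕ), ps[t]? = some p → ps[t + 1]? = some q →
      ∀ x ∈ q, ∃ j ∈ p, j < x ∧ a j < a x
  tops : ∀ (s t : ℕ) (p q : List ℕ), ps[s]? = some p → ps[t]? = some q → s < t →
      a p.headI < a q.headI

variable {a : ℕ → ℕ}

lemma pinv_place {m : ℕ} {ps : List (List ℕ)} (h : PInv a m ps)
    (hne : ∀ p ∈ ps, ∀ x ∈ p, a x ≠ a m) : PInv a (m + 1) (place a ps m) := by
  rcases place_spec a ps m with ⟨t, p, ht, hlt, hmin, heq⟩ | ⟨hall, heq⟩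
  · -- set case
    rw [heq]
    have hget : ∀ s, (ps.set t (m :: p))[s]?
        = if s = t then some (m :: p) else ps[s]? := get?_set_cases ht _
    have hpmem : p ∈ ps := List.mem_of_getElem? ht
    have hpne : p ≠ [] := h.nonnil p hpmem
    have hmlt_p : ∀ y ∈ p, a m < a y := by
      intro y hy
      rcases head_min (h.inpile p hpmem) y hy with rfl | ⟨_, hv⟩
      · exact hlt
      · exact hlt.trans hv
    have hylt : ∀ y ∈ p, y < m := h.mem_lt p hpmem
    -- element elimination
    have helem : ∀ s r x, (ps.set t (m :: p))[s]? = some r → x ∈ r →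
        (x = m ∧ s = t) ∨ (∃ r', ps[s]? = some r' ∧ x ∈ r') := by
      intro s r x hs hx
      rw [hget] at hs
      by_cases hst : s = t
      · rw [if_pos hst] at hs
        cases hs
        rcases List.mem_cons.1 hx with rfl | hx'
        · exact Or.inl ⟨rfl, hst⟩
        · exact Or.inr ⟨p, hst ▸ ht, hx'⟩
      · rw [if_neg hst] at hs
        exact Or.inr ⟨r, hs, hx⟩
    have hmins : ∀ s q, s < t → ps[s]? = some q → a q.headI < a m := by
      intro s q hs hq
      have h1 := hmin s q hs hq
      have h2 := hne q (List.mem_of_getElem? hq) q.headI (headI_mem (h.nonnil q (List.mem_of_getElem? hq)))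
      omega
    constructor
    · -- nonnil
      intro q hq
      rcases List.mem_or_eq_of_mem_set hq with hq' | rfl
      · exact h.nonnil q hq'
      · simp
    · -- mem_lt
      intro q hq x hx
      rcases List.mem_or_eq_of_mem_set hq with hq' | rfl
      · exact Nat.lt_succ_of_lt (h.mem_lt q hq' x hx)
      · rcases List.mem_cons.1 hx with rfl | hx'
        · omega
        · exact Nat.lt_succ_of_lt (hylt x hx')
    · -- cover
      intro x hx
      rcases Nat.lt_succ_iff_lt_or_eq.1 hx with hx' | hxe
      · obtain ⟨t0, p0, ht0, hxp0⟩ := h.cover x hx'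
        by_cases h0 : t0 = t
        · subst h0
          rw [ht0] at ht; cases ht
          exact ⟨t0, m :: p, by rw [hget, if_pos rfl], List.mem_cons_of_mem _ hxp0⟩
        · exact ⟨t0, p0, by rw [hget, if_neg h0]; exact ht0, hxp0⟩
      · exact ⟨t, m :: p, by rw [hget, if_pos rfl], by rw [hxe]; exact List.mem_cons_self⟩
    · -- uniq
      intro s s' q q' x hs hs' hxq hxq'
      rcases helem s q x hs hxq with ⟨hxm, hst⟩ | ⟨r1, hr1, hxr1⟩
      · rcases helem s' q' x hs' hxq' with ⟨_, hst'⟩ | ⟨r2, hr2, hxr2⟩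
        · rw [hst, hst']
        · exact absurd (h.mem_lt r2 (List.mem_of_getElem? hr2) _ hxr2) (by omega)
      · rcases helem s' q' x hs' hxq' with ⟨hxm, hst'⟩ | ⟨r2, hr2, hxr2⟩
        · exact absurd (h.mem_lt r1 (List.mem_of_getElem? hr1) _ hxr1) (by omega)
        · exact h.uniq s s' r1 r2 x hr1 hr2 hxr1 hxr2
    · -- inpile
      intro q hq
      rcases List.mem_or_eq_of_mem_set hq with hq' | rfl
      · exact h.inpile q hq'
      · exact List.pairwise_cons.2 ⟨fun y hy => ⟨hylt y hy, hmlt_p y hy⟩, h.inpile p hpmem⟩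
    · -- cross
      intro s s' q q' hs hs' hss' x hxq' j hjq hxj
      rcases helem s' q' x hs' hxq' with ⟨hxm, hst'⟩ | ⟨r2, hr2, hxr2⟩
      · -- x = m, s' = t, j in pile s ≤ t, m < j impossible unless j = m
        rcases helem s q j hs hjq with ⟨hjm, hst⟩ | ⟨r1, hr1, hjr1⟩
        · omega
        · exact absurd (h.mem_lt r1 (List.mem_of_getElem? hr1) _ hjr1) (by omega)
      · rcases helem s q j hs hjq with ⟨hjm, hst⟩ | ⟨r1, hr1, hjr1⟩
        · -- j = m, s = t ≤ s', x in old pile s', need a m < a x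
          subst hjm
          by_cases hs'1 : s' = t
          · rw [hs'1] at hr2
            rw [hr2] at ht; cases ht
            exact hmlt_p x hxr2
          · have hts' : t < s' := lt_of_le_of_ne (hst ▸ hss') (fun e => hs'1 e.symm)
            have h1 : a p.headI < a r2.headI := h.tops t s' p r2 ht hr2 hts'
            have h2 : a r2.headI ≤ a x := by
              rcases head_min (h.inpile r2 (List.mem_of_getElem? hr2)) x hxr2 with he | ⟨_, hv⟩
              · rw [he]
              · exact le_of_lt hv
            omega
        · exact h.cross s s' r1 r2 hr1 hr2 hss' x hxr2 j hjr1 hxj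
    · -- steps
      intro t0 q q' ht0 ht0' x hx
      rcases helem (t0 + 1) q' x ht0' hx with ⟨hxm, hst'⟩ | ⟨r2, hr2, hxr2⟩
      · -- x = m at pile t, so t0 = t - 1 < t
        subst hxm
        have ht0t : t0 ≠ t := by omega
        rw [hget, if_neg ht0t] at ht0
        have hj := hmins t0 q (by omega) ht0
        refine ⟨q.headI, headI_mem (h.nonnil q (List.mem_of_getElem? ht0)), ?_, hj⟩
        exact h.mem_lt q (List.mem_of_getElem? ht0) _ (headI_mem (h.nonnil q (List.mem_of_getElem? ht0)))
      · -- x old; old steps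
        have ht0'' : ps[t0 + 1]? = some r2 := hr2
        rw [hget] at ht0
        by_cases h0 : t0 = t
        · rw [if_pos h0] at ht0
          cases ht0
          obtain ⟨j, hj1, hj2, hj3⟩ := h.steps t0 p r2 (h0 ▸ ht) ht0'' x hxr2
          exact ⟨j, List.mem_cons_of_mem _ hj1, hj2, hj3⟩
        · rw [if_neg h0] at ht0
          obtain ⟨j, hj1, hj2, hj3⟩ := h.steps t0 q r2 ht0 ht0'' x hxr2
          exact ⟨j, hj1, hj2, hj3⟩
    · -- tops
      intro s s' q q' hs hs' hss'
      rw [hget] at hs hs'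
      by_cases h0 : s = t
      · rw [if_pos h0] at hs
        cases hs
        have hs'1 : s' ≠ t := by omega
        rw [if_neg hs'1] at hs'
        have h1 : a p.headI < a q'.headI := h.tops t s' p q' ht hs' (h0 ▸ hss')
        simpa using lt_trans hlt h1
      · rw [if_neg h0] at hs
        by_cases h1 : s' = t
        · rw [if_pos h1] at hs'
          cases hs'
          have := hmins s q (h1 ▸ hss') hs
          simpa using this
        · rw [if_neg h1] at hs'
          exact h.tops s s' q q' hs hs' hss'
  · -- append case
    rw [heq]
    have hall' : ∀ q ∈ ps, a q.headI < a m := by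
      intro q hq
      have h2 := hne q hq q.headI (headI_mem (h.nonnil q hq))
      have := hall q hq
      omega
    have hlen : ∀ s r, (ps ++ [[m]])[s]? = some r →
        (ps[s]? = some r ∧ s < ps.length) ∨ (s = ps.length ∧ r = [m]) := by
      intro s r hs
      rcases lt_trichotomy s ps.length with hc | hc | hc
      · left; rw [List.getElem?_append_left hc] at hs; exact ⟨hs, hc⟩
      · right; subst hc
        rw [List.getElem?_concat_length] at hs
        cases hs; exact ⟨rfl, rfl⟩
      · exfalso
        rw [List.getElem?_eq_some_iff] at hs
        obtain ⟨hlt', _⟩ := hs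
        simp at hlt'
        omega
    have hgetold : ∀ s, s < ps.length → (ps ++ [[m]])[s]? = ps[s]? := by
      intro s hs; exact List.getElem?_append_left hs
    constructor
    · intro q hq
      rcases List.mem_append.1 hq with hq' | hq'
      · exact h.nonnil q hq'
      · simp at hq'; subst hq'; simp
    · intro q hq x hx
      rcases List.mem_append.1 hq with hq' | hq'
      · exact Nat.lt_succ_of_lt (h.mem_lt q hq' x hx)
      · simp at hq'; subst hq'; simp at hx; omega
    · intro x hx
      rcases Nat.lt_succ_iff_lt_or_eq.1 hx with hx' | hxe
      · obtain ⟨t0, p0, ht0, hxp0⟩ := h.cover x hx'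
        have : t0 < ps.length := by
          rw [List.getElem?_eq_some_iff] at ht0; exact ht0.1
        exact ⟨t0, p0, by rw [hgetold t0 this]; exact ht0, hxp0⟩
      · exact ⟨ps.length, [m], List.getElem?_concat_length, by rw [hxe]; simp⟩
    · intro s s' q q' x hs hs' hxq hxq'
      rcases hlen s q hs with ⟨hold, hslt⟩ | ⟨rfl, rfl⟩
      · rcases hlen s' q' hs' with ⟨hold', hslt'⟩ | ⟨rfl, rfl⟩
        · exact h.uniq s s' q q' x hold hold' hxq hxq'
        · simp at hxq'; subst hxq'
          exact absurd (h.mem_lt q (List.mem_of_getElem? hold) _ hxq) (by omega)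
      · rcases hlen s' q' hs' with ⟨hold', hslt'⟩ | ⟨rfl, rfl⟩
        · simp at hxq; subst hxq
          exact absurd (h.mem_lt q' (List.mem_of_getElem? hold') _ hxq') (by omega)
        · rfl
    · intro q hq
      rcases List.mem_append.1 hq with hq' | hq'
      · exact h.inpile q hq'
      · simp at hq'; subst hq'; simp
    · intro s s' q q' hs hs' hss' x hxq' j hjq hxj
      rcases hlen s' q' hs' with ⟨hold', hslt'⟩ | ⟨rfl, rfl⟩
      · rcases hlen s q hs with ⟨hold, hslt⟩ | ⟨hseq, rfl⟩
        · exact h.cross s s' q q' hold hold' hss' x hxq' j hjq hxj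
        · omega
      · simp at hxq'; subst hxq'
        rcases hlen s q hs with ⟨hold, hslt⟩ | ⟨hseq, rfl⟩
        · exact absurd (h.mem_lt q (List.mem_of_getElem? hold) _ hjq) (by omega)
        · simp at hjq; omega
    · intro t0 q q' ht0 ht0' x hx
      rcases hlen (t0 + 1) q' ht0' with ⟨hold', hslt'⟩ | ⟨hseq, rfl⟩
      · rcases hlen t0 q ht0 with ⟨hold, hslt⟩ | ⟨hseq, rfl⟩
        · exact h.steps t0 q q' hold hold' x hx
        · omega
      · simp at hx; subst hx
        rcases hlen t0 q ht0 with ⟨hold, hslt⟩ | ⟨hseq, rfl⟩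
        · refine ⟨q.headI, headI_mem (h.nonnil q (List.mem_of_getElem? hold)), ?_, hall' q (List.mem_of_getElem? hold)⟩
          exact h.mem_lt q (List.mem_of_getElem? hold) _ (headI_mem (h.nonnil q (List.mem_of_getElem? hold)))
        · omega
    · intro s s' q q' hs hs' hss'
      rcases hlen s' q' hs' with ⟨hold', hslt'⟩ | ⟨hseq, rfl⟩
      · rcases hlen s q hs with ⟨hold, hslt⟩ | ⟨hseq, rfl⟩
        · exact h.tops s s' q q' hold hold' hss'
        · omega
      · rcases hlen s q hs with ⟨hold, hslt⟩ | ⟨hseq, rfl⟩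
        · simpa using hall' q (List.mem_of_getElem? hold)
        · omega
lemma pilesOf_range_succ (a : ℕ → ℕ) (m : ℕ) :
    pilesOf a (List.range (m + 1)) = place a (pilesOf a (List.range m)) m := by
  simp [pilesOf, List.range_succ]

lemma pinv_nil (a : ℕ → ℕ) : PInv a 0 ([] : List (List ℕ)) := by
  constructor <;> simp

lemma pinv_pilesOf {n : ℕ} {a : ℕ → ℕ}
    (haInj : ∀ i ≤ n, ∀ j ≤ n, a i = a j → i = j) :
    ∀ m, m ≤ n + 1 → PInv a m (pilesOf a (List.range m)) := by
  intro m
  induction m with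
  | zero => intro _; simpa [pilesOf] using pinv_nil a
  | succ m ih =>
    intro hm
    rw [pilesOf_range_succ]
    have hPm := ih (by omega)
    refine pinv_place hPm ?_
    intro p hp x hx hax
    have hxm : x < m := hPm.mem_lt p hp x hx
    have := haInj x (by omega) m (by omega) hax
    omega

section Piles

variable {a : ℕ → ℕ} {m : ℕ} {ps : List (List ℕ)}

open Classical in
/-- position-to-pile choice -/
noncomputable def pidxL (ps : List (List ℕ)) (i : ℕ) : ℕ :=
  if h : ∃ (t : ℕ) (p : List ℕ), ps[t]? = some p ∧ i ∈ p then h.choose else 0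

lemma pidxL_spec {i : ℕ} (h : ∃ (t : ℕ) (p : List ℕ), ps[t]? = some p ∧ i ∈ p) :
    ∃ p, ps[pidxL ps i]? = some p ∧ i ∈ p := by
  rw [pidxL]
  rw [dif_pos h]
  exact h.choose_spec

lemma pidxL_cover (hP : PInv a m ps) {i : ℕ} (hi : i < m) :
    ∃ p, ps[pidxL ps i]? = some p ∧ i ∈ p :=
  pidxL_spec (hP.cover i hi)

lemma pidxL_eq (hP : PInv a m ps) {t : ℕ} {p : List ℕ} {i : ℕ}
    (ht : ps[t]? = some p) (hi : i ∈ p) : pidxL ps i = t := by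
  obtain ⟨q, hq, hiq⟩ := pidxL_spec ⟨t, p, ht, hi⟩
  exact hP.uniq _ _ q p i hq ht hiq hi

lemma below_elim (hP : PInv a m ps) {u v : ℕ}
    (h : ∃ p ∈ ps, ∃ k l : ℕ, k < l ∧ p[k]? = some v ∧ p[l]? = some u) :
    u < v ∧ a v < a u ∧ ∃ (t : ℕ) (p : List ℕ), ps[t]? = some p ∧ u ∈ p ∧ v ∈ p := by
  obtain ⟨p, hp, k, l, hkl, hk, hl⟩ := h
  obtain ⟨t, ht⟩ := mem_iff_get?.1 hp
  have hR := pairwise_get? (hP.inpile p hp) hk hl hkl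
  exact ⟨hR.1, hR.2, t, p, ht, List.mem_of_getElem? hl, List.mem_of_getElem? hk⟩

lemma below_intro (hP : PInv a m ps) {t : ℕ} {p : List ℕ} {u v : ℕ}
    (ht : ps[t]? = some p) (hu : u ∈ p) (hv : v ∈ p) (huv : u < v) :
    ∃ q ∈ ps, ∃ k l : ℕ, k < l ∧ q[k]? = some v ∧ q[l]? = some u := by
  have hp : p ∈ ps := List.mem_of_getElem? ht
  obtain ⟨k, hk⟩ := mem_iff_get?.1 hv
  obtain ⟨l, hl⟩ := mem_iff_get?.1 hu
  rcases lt_trichotomy k l with hc | hc | hc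
  · exact ⟨p, hp, k, l, hc, hk, hl⟩
  · exfalso; rw [hc, hl] at hk; cases hk; omega
  · have hR := pairwise_get? (hP.inpile p hp) hl hk hc
    omega

/-- Two distinct elements of a feasible set lie in distinct piles. -/
lemma same_pile_val (hP : PInv a m ps) {t : ℕ} {p : List ℕ} {u v : ℕ}
    (ht : ps[t]? = some p) (hu : u ∈ p) (hv : v ∈ p) (huv : u < v) :
    a v < a u :=
  (below_elim hP (below_intro hP ht hu hv huv)).2.1

lemma feasible_pile_inj (hP : PInv a m ps) {I : Finset ℕ} (hF : Feasible a I)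
    {x y : ℕ} (hx : x ∈ I) (hy : y ∈ I) {t : ℕ} {p : List ℕ}
    (ht : ps[t]? = some p) (hxp : x ∈ p) (hyp : y ∈ p) : x = y := by
  by_contra hne
  rcases lt_or_gt_of_ne hne with hlt | hlt
  · have h1 := same_pile_val hP ht hxp hyp hlt
    have h2 := hF x hx y hy hlt
    omega
  · have h1 := same_pile_val hP ht hyp hxp hlt
    have h2 := hF y hy x hx hlt
    omega

lemma get?_isSome_of_lt {l : List (List ℕ)} {t : ℕ} (h : t < l.length) :
    ∃ p, l[t]? = some p :=
  ⟨l.get ⟨t, h⟩, by rw [List.getElem?_eq_some_iff]; exact ⟨h, rfl⟩⟩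

lemma feasible_card_le (hP : PInv a m ps) {I : Finset ℕ}
    (hsub : ∀ i ∈ I, i < m) (hF : Feasible a I) : I.card ≤ ps.length := by
  have hmap : ∀ i ∈ I, pidxL ps i ∈ Finset.range ps.length := by
    intro i hi
    obtain ⟨p, hp, _⟩ := pidxL_cover hP (hsub i hi)
    rw [Finset.mem_range]
    rw [List.getElem?_eq_some_iff] at hp
    exact hp.1
  have hinj : Set.InjOn (pidxL ps) I := by
    intro x hx y hy hxy
    obtain ⟨p, hp, hxp⟩ := pidxL_cover hP (hsub x hx)
    obtain ⟨q, hq, hyq⟩ := pidxL_cover hP (hsub y hy)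
    rw [hxy, hq] at hp
    cases hp
    exact feasible_pile_inj hP hF hx hy hq hxp hyq
  simpa using Finset.card_le_card_of_injOn (pidxL ps) hmap hinj

lemma chain_exists (hP : PInv a m ps) :
    ∀ t p, ps[t]? = some p → ∀ i ∈ p, ∃ F : Finset ℕ,
      (∀ x ∈ F, x < m) ∧ Feasible a F ∧ F.card = t + 1 ∧ i ∈ F ∧
      ∀ x ∈ F, x ≤ i ∧ a x ≤ a i := by
  intro t
  induction t with
  | zero =>
    intro p hp i hi
    refine ⟨{i}, ?_, ?_, by simp, by simp, by simp⟩
    · intro x hx; rw [Finset.mem_singleton] at hx; rw [hx]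
      exact hP.mem_lt p (List.mem_of_getElem? hp) i hi
    · intro x hx y hy hxy
      rw [Finset.mem_singleton] at hx hy; omega
  | succ t ih =>
    intro p hp i hi
    have htlt : t < ps.length := by
      rw [List.getElem?_eq_some_iff] at hp; have := hp.1; omega
    obtain ⟨q, hq⟩ := get?_isSome_of_lt htlt
    obtain ⟨j, hjq, hji, haji⟩ := hP.steps t q p hq hp i hi
    obtain ⟨F, hFm, hFf, hFc, hjF, hFle⟩ := ih q hq j hjq
    have hiF : i ∉ F := by
      intro hiF
      have := (hFle i hiF).1
      omega
    refine ⟨insert i F, ?_, ?_, ?_, Finset.mem_insert_self i F, ?_⟩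
    · intro x hx
      rcases Finset.mem_insert.1 hx with rfl | hx'
      · exact hP.mem_lt p (List.mem_of_getElem? hp) x hi
      · exact hFm x hx'
    · intro x hx y hy hxy
      rcases Finset.mem_insert.1 hx with rfl | hx'
      · rcases Finset.mem_insert.1 hy with rfl | hy'
        · omega
        · have := (hFle y hy').1; omega
      · rcases Finset.mem_insert.1 hy with rfl | hy'
        · have := (hFle x hx').2; omega
        · exact hFf x hx' y hy' hxy
    · rw [Finset.card_insert_of_notMem hiF, hFc]
    · intro x hx
      rcases Finset.mem_insert.1 hx with rfl | hx'
      · omega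
      · have h1 := (hFle x hx').1
        have h2 := (hFle x hx').2
        omega

lemma exists_feasible_full (hP : PInv a m ps) (hm : 0 < m) :
    ∃ F : Finset ℕ, (∀ x ∈ F, x < m) ∧ Feasible a F ∧ F.card = ps.length := by
  have hne : ps ≠ [] := by
    obtain ⟨t, p, ht, _⟩ := hP.cover 0 hm
    intro h; subst h; simp at ht
  have hlen : 0 < ps.length := List.length_pos_iff.2 hne
  obtain ⟨p, hp⟩ := get?_isSome_of_lt (Nat.sub_lt hlen one_pos)
  have hpne : p ≠ [] := hP.nonnil p (List.mem_of_getElem? hp)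
  obtain ⟨F, h1, h2, h3, _, _⟩ := chain_exists hP _ p hp p.headI (headI_mem hpne)
  exact ⟨F, h1, h2, by rw [h3]; omega⟩
end Piles
section Main

variable {n : ℕ} {a : ℕ → ℕ}

lemma maxFeasible_iff (hP : PInv a (n + 1) (pilesOf a (List.range (n + 1)))) {I : Finset ℕ} :
    MaxFeasible a n I ↔ I ⊆ Finset.range (n + 1) ∧ Feasible a I ∧
      I.card = (pilesOf a (List.range (n + 1))).length := by
  constructor
  · rintro ⟨h1, h2, h3⟩
    refine ⟨h1, h2, le_antisymm ?_ ?_⟩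
    · exact feasible_card_le hP (fun i hi => Finset.mem_range.1 (h1 hi)) h2
    · obtain ⟨F, hF1, hF2, hF3⟩ := exists_feasible_full hP (Nat.succ_pos n)
      rw [← hF3]
      exact h3 F (fun i hi => Finset.mem_range.2 (hF1 i hi)) hF2
  · rintro ⟨h1, h2, h3⟩
    refine ⟨h1, h2, fun J hJ hJf => ?_⟩
    rw [h3]
    exact feasible_card_le hP (fun i hi => Finset.mem_range.1 (hJ hi)) hJf

lemma maxFeasible_order (hP : PInv a (n + 1) (pilesOf a (List.range (n + 1))))
    {I : Finset ℕ} (hI : MaxFeasible a n I) {i j s t : ℕ} {p q : List ℕ}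
    (hi : i ∈ I) (hj : j ∈ I)
    (hs : (pilesOf a (List.range (n + 1)))[s]? = some p) (hip : i ∈ p)
    (ht : (pilesOf a (List.range (n + 1)))[t]? = some q) (hjq : j ∈ q)
    (hst : s < t) : i < j ∧ a i < a j := by
  have hne : i ≠ j := by
    intro h; rw [h] at hip
    exact absurd (hP.uniq s t p q j hs ht hip hjq) (by omega)
  rcases lt_or_gt_of_ne hne with hlt | hlt
  · exact ⟨hlt, hI.2.1 i hi j hj hlt⟩
  · exfalso
    have h1 := hI.2.1 j hj i hi hlt
    have h2 := hP.cross s t p q hs ht (le_of_lt hst) j hjq i hip hlt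
    omega

lemma maxFeasible_system (hP : PInv a (n + 1) (pilesOf a (List.range (n + 1))))
    {I : Finset ℕ} (hI : MaxFeasible a n I) :
    ∀ t < (pilesOf a (List.range (n + 1))).length,
      ∃ x ∈ I, ∃ p, (pilesOf a (List.range (n + 1)))[t]? = some p ∧ x ∈ p := by
  set PS := pilesOf a (List.range (n + 1)) with hPS
  have hsub : ∀ i ∈ I, i < n + 1 := fun i hi => Finset.mem_range.1 (hI.1 hi)
  have himg : I.image (pidxL PS) = Finset.range PS.length := by
    apply Finset.eq_of_subset_of_card_le
    · intro t htm
      obtain ⟨i, hi, rfl⟩ := Finset.mem_image.1 htm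
      obtain ⟨p, hp, _⟩ := pidxL_cover hP (hsub i hi)
      rw [Finset.mem_range]
      rw [List.getElem?_eq_some_iff] at hp
      exact hp.1
    · rw [Finset.card_range, Finset.card_image_of_injOn, (maxFeasible_iff hP).1 hI |>.2.2]
      intro x hx y hy hxy
      obtain ⟨p, hp, hxp⟩ := pidxL_cover hP (hsub x hx)
      obtain ⟨q, hq, hyq⟩ := pidxL_cover hP (hsub y hy)
      rw [hxy, hq] at hp
      cases hp
      exact feasible_pile_inj hP hI.2.1 hx hy hq hxp hyq
  intro t htlen
  have : t ∈ I.image (pidxL PS) := by rw [himg]; exact Finset.mem_range.2 htlen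
  obtain ⟨x, hx, hpx⟩ := Finset.mem_image.1 this
  obtain ⟨p, hp, hxp⟩ := pidxL_cover hP (hsub x hx)
  exact ⟨x, hx, p, by rw [← hpx]; exact hp, hxp⟩

lemma sdiff_singletons {A B : Finset ℕ} {u v : ℕ} (hAB : A \ B = {u}) (hBA : B \ A = {v}) :
    A = insert u B \ {v} ∧ u ∉ B ∧ v ∈ B ∧ u ∈ A ∧ v ∉ A ∧ u ≠ v := by
  have h1 : ∀ x, (x ∈ A ∧ x ∉ B) ↔ x = u := by
    intro x
    rw [← Finset.mem_sdiff, hAB, Finset.mem_singleton]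
  have h2 : ∀ x, (x ∈ B ∧ x ∉ A) ↔ x = v := by
    intro x
    rw [← Finset.mem_sdiff, hBA, Finset.mem_singleton]
  have hu := (h1 u).2 rfl
  have hv := (h2 v).2 rfl
  have huv : u ≠ v := by
    intro h; rw [h] at hu; exact hu.2 hv.1
  refine ⟨?_, hu.2, hv.1, hu.1, hv.2, huv⟩
  ext x
  rw [Finset.mem_sdiff, Finset.mem_insert, Finset.mem_singleton]
  constructor
  · intro hxA
    constructor
    · by_cases hxB : x ∈ B
      · exact Or.inr hxB
      · exact Or.inl ((h1 x).1 ⟨hxA, hxB⟩)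
    · intro h; rw [h] at hxA; exact hv.2 hxA
  · rintro ⟨hx1 | hx2, hxv⟩
    · rw [hx1]; exact hu.1
    · by_contra hxA
      exact hxv ((h2 x).1 ⟨hx2, hxA⟩)

lemma stepLT_reconSteps {A B : Finset ℕ} (h : StepLT a n A B) :
    ReconStep B A ∧ ReconStep A B := by
  obtain ⟨hA, hB, u, v, hAB, hBA, _⟩ := h
  obtain ⟨he1, hu1, hv1, hu2, hv2, huv⟩ := sdiff_singletons hAB hBA
  obtain ⟨he2, _, _, _, _, _⟩ := sdiff_singletons hBA hAB
  exact ⟨⟨u, v, hu1, hv1, he1⟩, ⟨v, u, hv2, hu2, he2⟩⟩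

lemma stepLT_sum_lt (hP : PInv a (n + 1) (pilesOf a (List.range (n + 1))))
    {A B : Finset ℕ} (h : StepLT a n A B) :
    ∑ i ∈ B, a i < ∑ i ∈ A, a i := by
  obtain ⟨hA, hB, u, v, hAB, hBA, hbel⟩ := h
  obtain ⟨_, hu1, hv1, hu2, hv2, huv⟩ := sdiff_singletons hAB hBA
  have hval : a v < a u := (below_elim hP hbel).2.1
  have herase : A.erase u = B.erase v := by
    ext x
    rw [Finset.mem_erase, Finset.mem_erase]
    constructor
    · rintro ⟨hxu, hxA⟩
      have hxB : x ∈ B := by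
        by_contra hxB
        have : x ∈ A \ B := Finset.mem_sdiff.2 ⟨hxA, hxB⟩
        rw [hAB, Finset.mem_singleton] at this
        exact hxu this
      refine ⟨?_, hxB⟩
      intro h; rw [h] at hxA; exact hv2 hxA
    · rintro ⟨hxv, hxB⟩
      have hxA : x ∈ A := by
        by_contra hxA
        have : x ∈ B \ A := Finset.mem_sdiff.2 ⟨hxB, hxA⟩
        rw [hBA, Finset.mem_singleton] at this
        exact hxv this
      refine ⟨?_, hxA⟩
      intro h; rw [h] at hxB; exact hu1 hxB
  have e1 : a u + ∑ i ∈ A.erase u, a i = ∑ i ∈ A, a i := Finset.add_sum_erase A a hu2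
  have e2 : a v + ∑ i ∈ B.erase v, a i = ∑ i ∈ B, a i := Finset.add_sum_erase B a hv1
  rw [herase] at e1
  omega

lemma exists_nf (hP : PInv a (n + 1) (pilesOf a (List.range (n + 1))))
    {I : Finset ℕ} (hI : MaxFeasible a n I) :
    ∃ K, MaxFeasible a n K ∧ MinimalLT a n K ∧ Relation.ReflTransGen (StepLT a n) K I := by
  classical
  set C := ∑ i ∈ Finset.range (n + 1), a i with hC
  have hbound : ∀ A : Finset ℕ, MaxFeasible a n A → ∑ i ∈ A, a i ≤ C := by
    intro A hA
    exact Finset.sum_le_sum_of_subset hA.1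
  suffices H : ∀ c (I : Finset ℕ), MaxFeasible a n I → C - ∑ i ∈ I, a i ≤ c →
      ∃ K, MaxFeasible a n K ∧ MinimalLT a n K ∧ Relation.ReflTransGen (StepLT a n) K I by
    exact H C I hI (by omega)
  intro c
  induction c with
  | zero =>
    intro I hI hc
    by_cases hmin : MinimalLT a n I
    · exact ⟨I, hI, hmin, Relation.ReflTransGen.refl⟩
    · exfalso
      rw [MinimalLT] at hmin
      push_neg at hmin
      obtain ⟨J, hJ, hJI⟩ := hmin
      have hstep : StepLT a n J I := ⟨hJ, hI, hJI⟩
      have h1 := stepLT_sum_lt hP hstep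
      have h2 := hbound J hJ
      have h3 := hbound I hI
      omega
  | succ c ih =>
    intro I hI hc
    by_cases hmin : MinimalLT a n I
    · exact ⟨I, hI, hmin, Relation.ReflTransGen.refl⟩
    · rw [MinimalLT] at hmin
      push_neg at hmin
      obtain ⟨J, hJ, hJI⟩ := hmin
      have hstep : StepLT a n J I := ⟨hJ, hI, hJI⟩
      have h1 := stepLT_sum_lt hP hstep
      have h2 := hbound J hJ
      obtain ⟨K, hK1, hK2, hK3⟩ := ih J hJ (by omega)
      exact ⟨K, hK1, hK2, hK3.tail hstep⟩

end Main
section Main2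

variable {n : ℕ} {a : ℕ → ℕ}

lemma mem_insert_sdiff {X : Finset ℕ} {j k x : ℕ} (hjk : j ≠ k) :
    x ∈ insert j X \ {k} ↔ (x = j ∨ (x ∈ X ∧ x ≠ k)) := by
  rw [Finset.mem_sdiff, Finset.mem_insert, Finset.mem_singleton]
  constructor
  · rintro ⟨h1 | h1, h2⟩
    · exact Or.inl h1
    · exact Or.inr ⟨h1, h2⟩
  · rintro (h1 | ⟨h1, h2⟩)
    · exact ⟨Or.inl h1, by rw [h1]; exact hjk⟩
    · exact ⟨Or.inr h1, h2⟩

lemma recon_card {X : Finset ℕ} {j k : ℕ} (hj : j ∉ X) (hk : k ∈ X) :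
    (insert j X \ {k}).card = X.card := by
  rw [Finset.card_sdiff_of_subset (by simp [Finset.singleton_subset_iff, hj, hk, Finset.mem_insert])]
  rw [Finset.card_insert_of_notMem hj]
  simp

lemma recon_sdiffs {X : Finset ℕ} {j k : ℕ} (hj : j ∉ X) (hk : k ∈ X) :
    (insert j X \ {k}) \ X = {j} ∧ X \ (insert j X \ {k}) = {k} := by
  have hjk : j ≠ k := fun h => hj (h ▸ hk)
  constructor
  · ext x
    rw [Finset.mem_sdiff, mem_insert_sdiff hjk, Finset.mem_singleton]
    constructor
    · rintro ⟨h1 | ⟨h1, _⟩, h2⟩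
      · exact h1
      · exact absurd h1 h2
    · intro h; rw [h]; exact ⟨Or.inl rfl, hj⟩
  · ext x
    rw [Finset.mem_sdiff, mem_insert_sdiff hjk, Finset.mem_singleton]
    constructor
    · rintro ⟨h1, h2⟩
      by_contra hxk
      exact h2 (Or.inr ⟨h1, hxk⟩)
    · intro h; rw [h]
      refine ⟨hk, ?_⟩
      rintro (h1 | ⟨_, h2⟩)
      · exact hjk h1.symm
      · exact h2 rfl

lemma diamond (hP : PInv a (n + 1) (pilesOf a (List.range (n + 1))))
    {I J1 J2 : Finset ℕ} (h1 : StepLT a n J1 I) (h2 : StepLT a n J2 I) :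
    J1 = J2 ∨ StepLT a n J1 J2 ∨ StepLT a n J2 J1 ∨
      ∃ K, StepLT a n K J1 ∧ StepLT a n K J2 := by
  classical
  obtain ⟨hJ1, hI, u1, v1, hd11, hd12, hbel1⟩ := h1
  obtain ⟨hJ2, _, u2, v2, hd21, hd22, hbel2⟩ := h2
  obtain ⟨hJ1eq, hu1I, hv1I, hu1J1, hv1J1, hu1v1⟩ := sdiff_singletons hd11 hd12
  obtain ⟨hJ2eq, hu2I, hv2I, hu2J2, hv2J2, hu2v2⟩ := sdiff_singletons hd21 hd22
  obtain ⟨hlt1, hval1, t1, p1, ht1, hu1p, hv1p⟩ := below_elim hP hbel1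
  obtain ⟨hlt2, hval2, t2, p2, ht2, hu2p, hv2p⟩ := below_elim hP hbel2
  have hmJ1 : ∀ x, x ∈ J1 ↔ (x = u1 ∨ (x ∈ I ∧ x ≠ v1)) := by
    intro x; rw [hJ1eq]; exact mem_insert_sdiff hu1v1
  have hmJ2 : ∀ x, x ∈ J2 ↔ (x = u2 ∨ (x ∈ I ∧ x ≠ v2)) := by
    intro x; rw [hJ2eq]; exact mem_insert_sdiff hu2v2
  by_cases ht12 : t1 = t2
  · -- same pile
    rw [ht12, ht2] at ht1
    cases ht1
    have hv12 : v1 = v2 := feasible_pile_inj hP hI.2.1 hv1I hv2I ht2 hv1p hv2p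
    subst hv12
    by_cases hu12 : u1 = u2
    · left; rw [hJ1eq, hJ2eq, hu12]
    · have hu1J2 : u1 ∉ J2 := by
        rw [hmJ2]; rintro (h | ⟨h, _⟩); exact hu12 h; exact hu1I h
      have hu2J1 : u2 ∉ J1 := by
        rw [hmJ1]; rintro (h | ⟨h, _⟩); exact hu12 h.symm; exact hu2I h
      have hsd1 : J1 \ J2 = {u1} := by
        ext x
        rw [Finset.mem_sdiff, Finset.mem_singleton, hmJ1, hmJ2]
        constructor
        · rintro ⟨h3 | ⟨h3, h4⟩, h5⟩
          · exact h3
          · exact absurd (Or.inr ⟨h3, h4⟩) h5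
        · intro h; rw [h]
          refine ⟨Or.inl rfl, ?_⟩
          rintro (h3 | ⟨h3, _⟩); exact hu12 h3; exact hu1I h3
      have hsd2 : J2 \ J1 = {u2} := by
        ext x
        rw [Finset.mem_sdiff, Finset.mem_singleton, hmJ1, hmJ2]
        constructor
        · rintro ⟨h3 | ⟨h3, h4⟩, h5⟩
          · exact h3
          · exact absurd (Or.inr ⟨h3, h4⟩) h5
        · intro h; rw [h]
          refine ⟨Or.inl rfl, ?_⟩
          rintro (h3 | ⟨h3, _⟩); exact hu12 h3.symm; exact hu2I h3
      rcases lt_or_gt_of_ne hu12 with hlt | hlt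
      · right; left
        exact ⟨hJ1, hJ2, u1, u2, hsd1, hsd2, below_intro hP ht2 hu1p hu2p hlt⟩
      · right; right; left
        exact ⟨hJ2, hJ1, u2, u1, hsd2, hsd1, below_intro hP ht2 hu2p hu1p hlt⟩
  · -- different piles
    right; right; right
    have huniq : ∀ x ∈ p1, ∀ y ∈ p2, x ≠ y := by
      intro x hx y hy he
      rw [he] at hx
      exact ht12 (hP.uniq t1 t2 p1 p2 y ht1 ht2 hx hy)
    have hv12 : v1 ≠ v2 := huniq v1 hv1p v2 hv2p
    have hu12 : u1 ≠ u2 := huniq u1 hu1p u2 hu2p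
    have hu1v2 : u1 ≠ v2 := huniq u1 hu1p v2 hv2p
    have hu2v1 : u2 ≠ v1 := Ne.symm (huniq v1 hv1p u2 hu2p)
    have hv2J1 : v2 ∈ J1 := (hmJ1 v2).2 (Or.inr ⟨hv2I, Ne.symm hv12⟩)
    have hv1J2 : v1 ∈ J2 := (hmJ2 v1).2 (Or.inr ⟨hv1I, hv12⟩)
    have hu2J1 : u2 ∉ J1 := by
      rw [hmJ1]; rintro (h | ⟨h, _⟩); exact hu12 h.symm; exact hu2I h
    have hu1J2 : u1 ∉ J2 := by
      rw [hmJ2]; rintro (h | ⟨h, _⟩); exact hu12 h; exact hu1I h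
    set PS := pilesOf a (List.range (n + 1)) with hPS
    set K := insert u2 J1 \ {v2} with hKdef
    have hmK : ∀ x, x ∈ K ↔ (x = u1 ∨ x = u2 ∨ (x ∈ I ∧ x ≠ v1 ∧ x ≠ v2)) := by
      intro x
      rw [hKdef, mem_insert_sdiff hu2v2]
      rw [hmJ1 x]
      constructor
      · rintro (h | ⟨h | ⟨h3, h4⟩, h5⟩)
        · exact Or.inr (Or.inl h)
        · exact Or.inl h
        · exact Or.inr (Or.inr ⟨h3, h4, h5⟩)
      · rintro (h | h | ⟨h3, h4, h5⟩)
        · exact Or.inr ⟨Or.inl h, by rw [h]; exact hu1v2⟩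
        · exact Or.inl h
        · exact Or.inr ⟨Or.inr ⟨h3, h4⟩, h5⟩
    have hsdKJ1 := recon_sdiffs hu2J1 hv2J1
    have hu1K : u1 ∈ K := (hmK u1).2 (Or.inl rfl)
    have hsdKJ2a : K \ J2 = {u1} := by
      ext x
      rw [Finset.mem_sdiff, Finset.mem_singleton, hmK x, hmJ2 x]
      constructor
      · rintro ⟨h3 | h3 | ⟨h3, h4, h5⟩, h6⟩
        · exact h3
        · exact absurd (Or.inl h3) h6
        · exact absurd (Or.inr ⟨h3, h5⟩) h6
      · intro h; rw [h]
        refine ⟨Or.inl rfl, ?_⟩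
        rintro (h3 | ⟨h3, _⟩); exact hu12 h3; exact hu1I h3
    have hsdKJ2b : J2 \ K = {v1} := by
      ext x
      rw [Finset.mem_sdiff, Finset.mem_singleton, hmK x, hmJ2 x]
      constructor
      · rintro ⟨h3 | ⟨h3, h4⟩, h6⟩
        · exact absurd (Or.inr (Or.inl h3)) h6
        · by_contra hxv1
          exact h6 (Or.inr (Or.inr ⟨h3, hxv1, h4⟩))
      · intro h; rw [h]
        refine ⟨Or.inr ⟨hv1I, hv12⟩, ?_⟩
        rintro (h3 | h3 | ⟨_, h4, _⟩)
        · exact hu1v1 h3.symm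
        · exact hu2v1 h3.symm
        · exact h4 rfl
    -- K is maximum feasible
    have hKsub : K ⊆ Finset.range (n + 1) := by
      intro x hx
      rcases (hmK x).1 hx with h | h | ⟨h, _, _⟩
      · rw [h]; exact hJ1.1 hu1J1
      · rw [h]; exact hJ2.1 hu2J2
      · exact hI.1 h
    have hKlt : ∀ x ∈ K, x < n + 1 := fun x hx => Finset.mem_range.1 (hKsub hx)
    -- if u1 (resp. u2) and an I-element share a pile with it, contradiction
    have hupile : ∀ z (s : ℕ) px u' v' (t' : ℕ) p', z ∈ I → z ≠ v' →
        PS[s]? = some px → z ∈ px → u' ∈ px → v' ∈ I →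
        PS[t']? = some p' → u' ∈ p' → v' ∈ p' → False := by
      intro z s px u' v' t' p' hzI hzv hs hzp hup hvI ht' hup' hvp'
      have hst : s = t' := hP.uniq s t' px p' u' hs ht' hup hup'
      rw [hst, ht'] at hs; cases hs
      exact hzv (feasible_pile_inj hP hI.2.1 hzI hvI ht' hzp hvp')
    have key2 : ∀ x y (s : ℕ) px, PS[s]? = some px → x ∈ px → y ∈ px →
        x ∈ K → y ∈ K → x = y := by
      intro x y s px hs hxp hyp hxK hyK
      rcases (hmK x).1 hxK with hx1 | hx1 | ⟨hx1, hx2, hx3⟩ <;>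
        rcases (hmK y).1 hyK with hy1 | hy1 | ⟨hy1, hy2, hy3⟩
      · rw [hx1, hy1]
      · exfalso
        have e1 : s = t1 := hP.uniq s t1 px p1 u1 hs ht1 (hx1 ▸ hxp) hu1p
        have e2 : s = t2 := hP.uniq s t2 px p2 u2 hs ht2 (hy1 ▸ hyp) hu2p
        exact ht12 (e1 ▸ e2)
      · exact absurd (hupile y s px u1 v1 t1 p1 hy1 hy2 hs hyp (hx1 ▸ hxp) hv1I ht1 hu1p hv1p) not_false
      · exfalso
        have e1 : s = t2 := hP.uniq s t2 px p2 u2 hs ht2 (hx1 ▸ hxp) hu2p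
        have e2 : s = t1 := hP.uniq s t1 px p1 u1 hs ht1 (hy1 ▸ hyp) hu1p
        exact ht12 (e2 ▸ e1)
      · rw [hx1, hy1]
      · exact absurd (hupile y s px u2 v2 t2 p2 hy1 hy3 hs hyp (hx1 ▸ hxp) hv2I ht2 hu2p hv2p) not_false
      · exact absurd (hupile x s px u1 v1 t1 p1 hx1 hx2 hs hxp (hy1 ▸ hyp) hv1I ht1 hu1p hv1p) not_false
      · exact absurd (hupile x s px u2 v2 t2 p2 hx1 hx3 hs hxp (hy1 ▸ hyp) hv2I ht2 hu2p hv2p) not_false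
      · exact feasible_pile_inj hP hI.2.1 hx1 hy1 hs hxp hyp
    have key : ∀ x y (sx sy : ℕ) px py, PS[sx]? = some px → x ∈ px →
        PS[sy]? = some py → y ∈ py → sx < sy → x ∈ K → y ∈ K →
        x < y ∧ a x < a y := by
      intro x y sx sy px py hsx hxp hsy hyp hss hxK hyK
      rcases (hmK x).1 hxK with hx1 | hx1 | ⟨hx1, hx2, hx3⟩ <;>
        rcases (hmK y).1 hyK with hy1 | hy1 | ⟨hy1, hy2, hy3⟩
      · -- u1, u1 : same pile, impossible
        exfalso
        have e1 : sx = t1 := hP.uniq sx t1 px p1 u1 hsx ht1 (hx1 ▸ hxp) hu1p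
        have e2 : sy = t1 := hP.uniq sy t1 py p1 u1 hsy ht1 (hy1 ▸ hyp) hu1p
        omega
      · -- u1, u2 : t1 < t2 chain
        have e1 : sx = t1 := hP.uniq sx t1 px p1 u1 hsx ht1 (hx1 ▸ hxp) hu1p
        have e2 : sy = t2 := hP.uniq sy t2 py p2 u2 hsy ht2 (hy1 ▸ hyp) hu2p
        have ht12' : t1 < t2 := by omega
        have c1 := maxFeasible_order hP hJ1 hu1J1 hv2J1 ht1 hu1p ht2 hv2p ht12'
        have c2 := maxFeasible_order hP hJ2 hv1J2 hu2J2 ht1 hv1p ht2 hu2p ht12'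
        rw [hx1, hy1]
        constructor
        · omega
        · have := c1.2; have := c2.2; omega
      · -- u1, I-elt : both in J1
        have hyJ1 : y ∈ J1 := (hmJ1 y).2 (Or.inr ⟨hy1, hy2⟩)
        have := maxFeasible_order hP hJ1 hu1J1 hyJ1 hsx (hx1 ▸ hxp) hsy hyp hss
        rw [hx1]; exact this
      · -- u2, u1 : t2 < t1 chain
        have e1 : sx = t2 := hP.uniq sx t2 px p2 u2 hsx ht2 (hx1 ▸ hxp) hu2p
        have e2 : sy = t1 := hP.uniq sy t1 py p1 u1 hsy ht1 (hy1 ▸ hyp) hu1p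
        have ht21 : t2 < t1 := by omega
        have c1 := maxFeasible_order hP hJ2 hu2J2 hv1J2 ht2 hu2p ht1 hv1p ht21
        have c2 := maxFeasible_order hP hJ1 hv2J1 hu1J1 ht2 hv2p ht1 hu1p ht21
        rw [hx1, hy1]
        constructor
        · omega
        · have := c1.2; have := c2.2; omega
      · exfalso
        have e1 : sx = t2 := hP.uniq sx t2 px p2 u2 hsx ht2 (hx1 ▸ hxp) hu2p
        have e2 : sy = t2 := hP.uniq sy t2 py p2 u2 hsy ht2 (hy1 ▸ hyp) hu2p
        omega
      · have hyJ2 : y ∈ J2 := (hmJ2 y).2 (Or.inr ⟨hy1, hy3⟩)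
        have := maxFeasible_order hP hJ2 hu2J2 hyJ2 hsx (hx1 ▸ hxp) hsy hyp hss
        rw [hx1]; exact this
      · have hxJ1 : x ∈ J1 := (hmJ1 x).2 (Or.inr ⟨hx1, hx2⟩)
        have := maxFeasible_order hP hJ1 hxJ1 hu1J1 hsx hxp hsy (hy1 ▸ hyp) hss
        rw [hy1]; exact this
      · have hxJ2 : x ∈ J2 := (hmJ2 x).2 (Or.inr ⟨hx1, hx3⟩)
        have := maxFeasible_order hP hJ2 hxJ2 hu2J2 hsx hxp hsy (hy1 ▸ hyp) hss
        rw [hy1]; exact this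
      · exact maxFeasible_order hP hI hx1 hy1 hsx hxp hsy hyp hss
    have hKfeas : Feasible a K := by
      intro x hx y hy hxy
      obtain ⟨px, hpx, hxpx⟩ := pidxL_cover hP (hKlt x hx)
      obtain ⟨py, hpy, hypy⟩ := pidxL_cover hP (hKlt y hy)
      rcases lt_trichotomy (pidxL PS x) (pidxL PS y) with hc | hc | hc
      · exact (key x y _ _ px py hpx hxpx hpy hypy hc hx hy).2
      · exfalso
        have he : px = py := by
          rw [hc, hpy] at hpx
          exact (Option.some.inj hpx).symm
        have := key2 x y _ py hpy (he ▸ hxpx) hypy hx hy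
        omega
      · exfalso
        have := (key y x _ _ py px hpy hypy hpx hxpx hc hy hx).1
        omega
    have hKmax : MaxFeasible a n K := by
      rw [maxFeasible_iff hP]
      refine ⟨hKsub, hKfeas, ?_⟩
      rw [hKdef, recon_card hu2J1 hv2J1]
      exact ((maxFeasible_iff hP).1 hJ1).2.2
    exact ⟨K, ⟨hKmax, hJ1, u2, v2, hsdKJ1.1, hsdKJ1.2, hbel2⟩,
      ⟨hKmax, hJ2, u1, v1, hsdKJ2a, hsdKJ2b, hbel1⟩⟩

end Main2
section Main3

variable {n : ℕ} {a : ℕ → ℕ}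

lemma reconStep_stepLT (hP : PInv a (n + 1) (pilesOf a (List.range (n + 1))))
    {I I' : Finset ℕ} (hI : MaxFeasible a n I) (hI' : MaxFeasible a n I')
    (h : ReconStep I I') : StepLT a n I I' ∨ StepLT a n I' I := by
  classical
  obtain ⟨j, k, hj, hk, he⟩ := h
  have hsd : I' \ I = {j} ∧ I \ I' = {k} := by
    rw [he]; exact recon_sdiffs hj hk
  have hjk : j ≠ k := fun h' => hj (h' ▸ hk)
  have hjI' : j ∈ I' := by
    rw [he, mem_insert_sdiff hjk]; exact Or.inl rfl
  have hkn : k < n + 1 := Finset.mem_range.1 (hI.1 hk)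
  have hjn : j < n + 1 := Finset.mem_range.1 (hI'.1 hjI')
  obtain ⟨pk, hpk, hkpk⟩ := pidxL_cover hP hkn
  obtain ⟨pj, hpj, hjpj⟩ := pidxL_cover hP hjn
  set PS := pilesOf a (List.range (n + 1)) with hPS
  -- j and k lie in the same pile
  have hsame : pidxL PS j = pidxL PS k := by
    by_contra hne
    have hlen : pidxL PS j < PS.length := by
      rw [List.getElem?_eq_some_iff] at hpj; exact hpj.1
    obtain ⟨x, hxI, p, hp, hxp⟩ := maxFeasible_system hP hI (pidxL PS j) hlen
    rw [hpj] at hp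
    cases hp
    have hxk : x ≠ k := by
      intro hxe
      rw [hxe] at hxp
      exact hne (hP.uniq _ _ pj pk k hpj hpk hxp hkpk)
    have hxI' : x ∈ I' := by
      rw [he, mem_insert_sdiff hjk]
      exact Or.inr ⟨hxI, hxk⟩
    have : x = j := feasible_pile_inj hP hI'.2.1 hxI' hjI' hpj hxp hjpj
    rw [this] at hxI
    exact hj hxI
  rw [hsame, hpk] at hpj
  cases hpj
  rcases lt_or_gt_of_ne hjk with hlt | hlt
  · -- j < k : j is deeper, Below j k, I' \ I = {j} : StepLT I' I
    right
    exact ⟨hI', hI, j, k, hsd.1, hsd.2, below_intro hP hpk hjpj hkpk hlt⟩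
  · left
    exact ⟨hI, hI', k, j, hsd.2, hsd.1, below_intro hP hpk hkpk hjpj hlt⟩

lemma rtg_flip {α : Type*} {r : α → α → Prop} {x y : α}
    (h : Relation.ReflTransGen r x y) :
    Relation.ReflTransGen (fun a b => r b a) y x := by
  induction h with
  | refl => exact Relation.ReflTransGen.refl
  | tail _ h2 ih => exact Relation.ReflTransGen.head h2 ih

lemma rtg_min_eq {K D : Finset ℕ}
    (h : Relation.ReflTransGen (fun x y => StepLT a n y x) K D)
    (hm : MinimalLT a n K) : D = K := by
  rcases Relation.ReflTransGen.cases_head h with he | ⟨c, hc, _⟩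
  · exact he.symm
  · exact absurd hc.2.2 (hm c hc.1)

lemma nf_unique (hP : PInv a (n + 1) (pilesOf a (List.range (n + 1))))
    {I K1 K2 : Finset ℕ}
    (h1 : Relation.ReflTransGen (StepLT a n) K1 I)
    (h2 : Relation.ReflTransGen (StepLT a n) K2 I)
    (hm1 : MinimalLT a n K1) (hm2 : MinimalLT a n K2) : K1 = K2 := by
  set r : Finset ℕ → Finset ℕ → Prop := fun x y => StepLT a n y x with hr
  have hcr : ∀ (A B C : Finset ℕ), r A B → r A C →
      ∃ D, Relation.ReflGen r B D ∧ Relation.ReflTransGen r C D := by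
    intro A B C hAB hAC
    rcases diamond hP hAB hAC with he | hs | hs | ⟨K, hK1, hK2⟩
    · exact ⟨B, Relation.ReflGen.refl, by rw [he]⟩
    · exact ⟨B, Relation.ReflGen.refl, Relation.ReflTransGen.single hs⟩
    · exact ⟨C, Relation.ReflGen.single hs, Relation.ReflTransGen.refl⟩
    · exact ⟨K, Relation.ReflGen.single hK1, Relation.ReflTransGen.single hK2⟩
  obtain ⟨D, hD1, hD2⟩ := Relation.church_rosser hcr (rtg_flip h1) (rtg_flip h2)
  have e1 := rtg_min_eq hD1 hm1
  have e2 := rtg_min_eq hD2 hm2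
  rw [← e1, ← e2]

lemma reconStep_symm {A B : Finset ℕ} (h : ReconStep A B) : ReconStep B A := by
  obtain ⟨j, k, hj, hk, hB⟩ := h
  have hsd : B \ A = {j} ∧ A \ B = {k} := by
    rw [hB]; exact recon_sdiffs hj hk
  obtain ⟨he, hkB, hjB, _, _, _⟩ := sdiff_singletons hsd.2 hsd.1
  exact ⟨k, j, by exact fun hc => (Finset.mem_sdiff.1 (by rw [hsd.2]; exact Finset.mem_singleton_self k : k ∈ A \ B)).2 hc, hjB, he⟩

lemma rtg_to_seq {K I : Finset ℕ} (hK : MaxFeasible a n K)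
    (h : Relation.ReflTransGen (StepLT a n) K I) :
    ∃ ℓ f, ReconSeq a (Finset.range (n + 1)) ℓ f ∧ f 0 = I ∧ f ℓ = K := by
  induction h with
  | refl =>
    exact ⟨0, fun _ => K, ⟨fun i _ => ⟨hK.1, hK.2.1⟩, fun i hi => absurd hi (by omega)⟩,
      rfl, rfl⟩
  | @tail b c hKb hbc ih =>
    obtain ⟨ℓ, f, hseq, hf0, hfl⟩ := ih
    have hrecon : ReconStep c b := (stepLT_reconSteps hbc).1
    have hcmax : MaxFeasible a n c := hbc.2.1
    refine ⟨ℓ + 1, fun i => if i = 0 then c else f (i - 1), ⟨?_, ?_⟩, by simp, ?_⟩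
    · intro i hi
      by_cases h0 : i = 0
      · simp only [h0, if_pos rfl]
        exact ⟨hcmax.1, hcmax.2.1⟩
      · simp only [if_neg h0]
        exact hseq.1 (i - 1) (by omega)
    · intro i hi
      by_cases h0 : i = 0
      · subst h0
        simp only [if_pos rfl, if_neg (by omega : (0 : ℕ) + 1 ≠ 0)]
        have : (0 : ℕ) + 1 - 1 = 0 := by omega
        rw [this, hf0]
        exact hrecon
      · simp only [if_neg h0, if_neg (by omega : i + 1 ≠ 0)]
        have e1 : i + 1 - 1 = (i - 1) + 1 := by omega
        rw [e1]
        exact hseq.2 (i - 1) (by omega)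
    · simp only [if_neg (by omega : ℓ + 1 ≠ 0)]
      have : ℓ + 1 - 1 = ℓ := by omega
      rw [this, hfl]

lemma seq_reverse {S : Finset ℕ} {ℓ : ℕ} {f : ℕ → Finset ℕ} (h : ReconSeq a S ℓ f) :
    ReconSeq a S ℓ (fun i => f (ℓ - i)) := by
  refine ⟨fun i hi => h.1 (ℓ - i) (by omega), fun i hi => ?_⟩
  have h1 := h.2 (ℓ - i - 1) (by omega)
  have e1 : ℓ - i - 1 + 1 = ℓ - i := by omega
  rw [e1] at h1
  have e2 : ℓ - (i + 1) = ℓ - i - 1 := by omega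
  simp only []
  rw [e2]
  exact reconStep_symm h1

lemma seq_append {S : Finset ℕ} {ℓ1 ℓ2 : ℕ} {f1 f2 : ℕ → Finset ℕ}
    (h1 : ReconSeq a S ℓ1 f1) (h2 : ReconSeq a S ℓ2 f2) (hmid : f1 ℓ1 = f2 0) :
    ReconSeq a S (ℓ1 + ℓ2) (fun i => if i ≤ ℓ1 then f1 i else f2 (i - ℓ1)) := by
  constructor
  · intro i hi
    by_cases hc : i ≤ ℓ1
    · simp only [if_pos hc]
      exact h1.1 i hc
    · simp only [if_neg hc]
      exact h2.1 (i - ℓ1) (by omega)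
  · intro i hi
    by_cases hc : i + 1 ≤ ℓ1
    · simp only [if_pos hc, if_pos (by omega : i ≤ ℓ1)]
      exact h1.2 i (by omega)
    · by_cases hc2 : i ≤ ℓ1
      · have he : i = ℓ1 := by omega
        subst he
        simp only [if_pos le_rfl, if_neg hc]
        have e : i + 1 - i = 1 := by omega
        rw [e, hmid]
        exact h2.2 0 (by omega)
      · simp only [if_neg hc2, if_neg hc]
        have e : i + 1 - ℓ1 = (i - ℓ1) + 1 := by omega
        rw [e]
        exact h2.2 (i - ℓ1) (by omega)

end Main3
end Stmt10

/-- For maximum feasible sets `I` and `J` of `a₀ = 0, a₁, …, aₙ` (where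
`a₁, …, aₙ` are distinct integers between `1` and `n`), there is a
reconfiguration sequence between `I` and `J` if and only if `I` and `J` are
`⊲`-equivalent, i.e. the unique `⊲`-minimal set of `M(I)` equals the unique
`⊲`-minimal set of `M(J)` (equivalently, some `⊲`-minimal maximum feasible
set lies in both `M(I)` and `M(J)`). -/
theorem stmt10 (n : ℕ) (a : ℕ → ℕ) (hn : 0 < n) (h0 : a 0 = 0)
    (hmem : ∀ i ∈ Finset.Icc 1 n, a i ∈ Finset.Icc 1 n)
    (hinj : ∀ i ∈ Finset.Icc 1 n, ∀ j ∈ Finset.Icc 1 n, a i = a j → i = j)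
    (I J : Finset ℕ) (hI : MaxFeasible a n I) (hJ : MaxFeasible a n J) :
    (∃ ℓ f, ReconSeq a (Finset.range (n + 1)) ℓ f ∧ f 0 = I ∧ f ℓ = J) ↔
      (∃ K : Finset ℕ, MaxFeasible a n K ∧ MinimalLT a n K ∧
        InLowerSet a n K I ∧ InLowerSet a n K J) := by
  classical
  have haInj : ∀ i ≤ n, ∀ j ≤ n, a i = a j → i = j := by
    intro i hi j hj he
    rcases Nat.eq_zero_or_pos i with rfl | hip
    · rcases Nat.eq_zero_or_pos j with rfl | hjp
      · rfl
      · exfalso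
        have := hmem j (Finset.mem_Icc.2 ⟨hjp, hj⟩)
        rw [Finset.mem_Icc] at this
        rw [h0] at he
        omega
    · rcases Nat.eq_zero_or_pos j with rfl | hjp
      · exfalso
        have := hmem i (Finset.mem_Icc.2 ⟨hip, hi⟩)
        rw [Finset.mem_Icc] at this
        rw [h0] at he
        omega
      · exact hinj i (Finset.mem_Icc.2 ⟨hip, hi⟩) j (Finset.mem_Icc.2 ⟨hjp, hj⟩) he
  have hP := Stmt10.pinv_pilesOf haInj (n + 1) le_rfl
  constructor
  · rintro ⟨ℓ, f, hseq, hf0, hfl⟩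
    have hmaxall : ∀ i ≤ ℓ, MaxFeasible a n (f i) := by
      intro i
      induction i with
      | zero => intro _; rw [hf0]; exact hI
      | succ i ih =>
        intro hi
        have hprev := ih (by omega)
        obtain ⟨j, k, hj, hk, he⟩ := hseq.2 i (by omega)
        rw [Stmt10.maxFeasible_iff hP]
        refine ⟨(hseq.1 (i + 1) hi).1, (hseq.1 (i + 1) hi).2, ?_⟩
        rw [he, Stmt10.recon_card hj hk]
        exact ((Stmt10.maxFeasible_iff hP).1 hprev).2.2
    have hinv : ∀ i ≤ ℓ, ∃ K, MaxFeasible a n K ∧ MinimalLT a n K ∧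
        Relation.ReflTransGen (StepLT a n) K I ∧
        Relation.ReflTransGen (StepLT a n) K (f i) := by
      intro i
      induction i with
      | zero =>
        intro _
        obtain ⟨K, h1, h2, h3⟩ := Stmt10.exists_nf hP hI
        exact ⟨K, h1, h2, h3, by rw [hf0]; exact h3⟩
      | succ i ih =>
        intro hi
        obtain ⟨K, hK1, hK2, hK3, hK4⟩ := ih (by omega)
        rcases Stmt10.reconStep_stepLT hP (hmaxall i (by omega)) (hmaxall (i + 1) hi)
            (hseq.2 i (by omega)) with hs | hs
        · exact ⟨K, hK1, hK2, hK3, hK4.tail hs⟩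
        · obtain ⟨K', h1, h2, h3⟩ := Stmt10.exists_nf hP (hmaxall (i + 1) hi)
          have h4 := h3.tail hs
          have he := Stmt10.nf_unique hP h4 hK4 h2 hK2
          exact ⟨K, hK1, hK2, hK3, he ▸ h3⟩
    obtain ⟨K, h1, h2, h3, h4⟩ := hinv ℓ le_rfl
    exact ⟨K, h1, h2, h3, by rw [← hfl]; exact h4⟩
  · rintro ⟨K, hK, hKmin, hKI, hKJ⟩
    obtain ⟨ℓ1, f1, hs1, he1, he2⟩ := Stmt10.rtg_to_seq hK hKI
    obtain ⟨ℓ2, f2, hs2, he3, he4⟩ := Stmt10.rtg_to_seq hK hKJ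
    have hs2' := Stmt10.seq_reverse hs2
    have hmid : f1 ℓ1 = (fun i => f2 (ℓ2 - i)) 0 := by
      show f1 ℓ1 = f2 (ℓ2 - 0)
      rw [Nat.sub_zero, he4, he2]
    have happ := Stmt10.seq_append hs1 hs2' hmid
    refine ⟨ℓ1 + ℓ2, _, happ, ?_, ?_⟩
    · show (if 0 ≤ ℓ1 then f1 0 else f2 (ℓ2 - (0 - ℓ1))) = I
      rw [if_pos (Nat.zero_le ℓ1)]
      exact he1
    · by_cases hc : ℓ2 = 0
      · subst hc
        show (if ℓ1 + 0 ≤ ℓ1 then f1 (ℓ1 + 0) else f2 (0 - (ℓ1 + 0 - ℓ1))) = J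
        rw [if_pos (by omega : ℓ1 + 0 ≤ ℓ1)]
        have : f1 (ℓ1 + 0) = f1 ℓ1 := by norm_num
        rw [this, he2, ← he4, he3]
      · show (if ℓ1 + ℓ2 ≤ ℓ1 then f1 (ℓ1 + ℓ2) else f2 (ℓ2 - (ℓ1 + ℓ2 - ℓ1))) = J
        rw [if_neg (by omega : ¬ ℓ1 + ℓ2 ≤ ℓ1)]
        have e : ℓ2 - (ℓ1 + ℓ2 - ℓ1) = 0 := by omega
        rw [e]
        exact he3
end

section
/- Let A be a sequence of n distinct integers between 1 and n whose permutation graph G_A is bipartite, and let I and J be maximum feasible sets for A. If there exists a reconfiguration sequence between I and J, then there exists a reconfiguration sequence between I and J of length exactly |I \ J|. -/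
/-- The permutation graph of the sequence `a₁, …, aₙ`: vertices are the
indices `1, …, n`, and `i < j` are adjacent iff `a i > a j`. -/
def permGraph (a : ℕ → ℕ) (n : ℕ) : SimpleGraph ℕ where
  Adj i j := i ∈ Finset.Icc 1 n ∧ j ∈ Finset.Icc 1 n ∧
    ((i < j ∧ a j < a i) ∨ (j < i ∧ a i < a j))
  symm := by
    constructor
    intro i j ⟨hi, hj, h⟩
    exact ⟨hj, hi, h.symm⟩
  loopless := by
    constructor
    intro i ⟨_, _, h⟩
    rcases h with ⟨h, _⟩ | ⟨h, _⟩ <;> exact lt_irrefl i h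

/-- A maximum feasible set for `a₁, …, aₙ`: a feasible subset of the index
set `{1, …, n}` of largest cardinality (equivalently, a maximum independent
set of the permutation graph). -/
def MaxFeasibleIcc (a : ℕ → ℕ) (n : ℕ) (I : Finset ℕ) : Prop :=
  I ⊆ Finset.Icc 1 n ∧ Feasible a I ∧
    ∀ J ⊆ Finset.Icc 1 n, Feasible a J → J.card ≤ I.card

section Aux

variable (a : ℕ → ℕ) (n : ℕ)

instance feasDec (a : ℕ → ℕ) : DecidablePred (Feasible a) := fun I =>
  decidable_of_iff (∀ i ∈ I, ∀ j ∈ I, i < j → a i < a j) Iff.rfl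

/-- chains (increasing subsequences) inside `Icc 1 n` ending at `i`. -/
def chainsTo (i : ℕ) : Finset (Finset ℕ) :=
  (Finset.Icc 1 n).powerset.filter (fun T => Feasible a T ∧ i ∈ T ∧ ∀ j ∈ T, j ≤ i)

/-- rank of `i`: the longest chain ending at `i`. -/
def rnk (i : ℕ) : ℕ := (chainsTo a n i).sup Finset.card

/-- majority of three finsets -/
def med3 (I X J : Finset ℕ) : Finset ℕ := (I ∩ X) ∪ (X ∩ J) ∪ (I ∩ J)

lemma mem_med3 {I X J : Finset ℕ} {e : ℕ} :
    e ∈ med3 I X J ↔ (e ∈ I ∧ e ∈ X) ∨ (e ∈ X ∧ e ∈ J) ∨ (e ∈ I ∧ e ∈ J) := by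
  simp [med3, Finset.mem_union, Finset.mem_inter, or_assoc]

lemma feasible_singleton (i : ℕ) : Feasible a {i} := by
  intro p hp q hq hpq
  simp only [Finset.mem_singleton] at hp hq
  omega

lemma singleton_mem_chainsTo {i : ℕ} (hi : i ∈ Finset.Icc 1 n) : {i} ∈ chainsTo a n i := by
  unfold chainsTo
  refine Finset.mem_filter.mpr ⟨Finset.mem_powerset.mpr ?_, feasible_singleton a i, ?_, ?_⟩
  · simpa using hi
  · simp
  · simp

lemma rnk_pos {i : ℕ} (hi : i ∈ Finset.Icc 1 n) : 1 ≤ rnk a n i := by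
  have h := Finset.le_sup (f := Finset.card) (singleton_mem_chainsTo a n hi)
  rw [Finset.card_singleton] at h
  exact h

lemma rnk_le {κ : ℕ} (hmax : ∀ T ⊆ Finset.Icc 1 n, Feasible a T → T.card ≤ κ) (i : ℕ) :
    rnk a n i ≤ κ := by
  refine Finset.sup_le fun T hT => ?_
  rw [chainsTo, Finset.mem_filter, Finset.mem_powerset] at hT
  exact hmax T hT.1 hT.2.1

lemma rnk_lt {i j : ℕ} (hi : i ∈ Finset.Icc 1 n) (hj : j ∈ Finset.Icc 1 n)
    (hij : i < j) (hv : a i < a j) : rnk a n i < rnk a n j := by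
  obtain ⟨T, hT, hTc⟩ := Finset.exists_mem_eq_sup _ ⟨{i}, singleton_mem_chainsTo a n hi⟩
    Finset.card
  rw [chainsTo, Finset.mem_filter, Finset.mem_powerset] at hT
  obtain ⟨hTsub, hTfeas, hiT, hTle⟩ := hT
  have hjT : j ∉ T := fun h => by have := hTle j h; omega
  have hmem : insert j T ∈ chainsTo a n j := by
    rw [chainsTo, Finset.mem_filter, Finset.mem_powerset]
    refine ⟨?_, ?_, Finset.mem_insert_self _ _, ?_⟩
    · intro e he
      rcases Finset.mem_insert.mp he with rfl | he
      · exact hj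
      · exact hTsub he
    · intro p hp q hq hpq
      rcases Finset.mem_insert.mp hp with hpj | hpT
      · rcases Finset.mem_insert.mp hq with hqj | hqT
        · omega
        · have := hTle q hqT; omega
      · rcases Finset.mem_insert.mp hq with hqj | hqT
        · subst hqj
          rcases eq_or_lt_of_le (hTle p hpT) with heq | hlt
          · subst heq; exact hv
          · exact (hTfeas p hpT i hiT hlt).trans hv
        · exact hTfeas p hpT q hqT hpq
    · intro e he
      rcases Finset.mem_insert.mp he with rfl | he
      · exact le_refl e
      · exact le_of_lt ((hTle e he).trans_lt hij)
  have h2 := Finset.le_sup (f := Finset.card) hmem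
  rw [Finset.card_insert_of_notMem hjT] at h2
  have : rnk a n i = T.card := hTc
  unfold rnk at *
  omega

end Aux

section Ctx

variable {a : ℕ → ℕ} {n : ℕ}
variable (hinj : ∀ i ∈ Finset.Icc 1 n, ∀ j ∈ Finset.Icc 1 n, a i = a j → i = j)
variable (hT : ∀ i j l, i ∈ Finset.Icc 1 n → j ∈ Finset.Icc 1 n → l ∈ Finset.Icc 1 n →
    i < j → j < l → a j < a i → a l < a j → False)

include hinj in
lemma dec_of_same_rnk {i j : ℕ} (hi : i ∈ Finset.Icc 1 n) (hj : j ∈ Finset.Icc 1 n)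
    (hr : rnk a n i = rnk a n j) (hij : i < j) : a j < a i := by
  rcases lt_trichotomy (a i) (a j) with h | h | h
  · have := rnk_lt a n hi hj hij h; omega
  · have := hinj i hi j hj h; omega
  · exact h

include hinj hT in
lemma tri_sorted {x y z : ℕ} (hx : x ∈ Finset.Icc 1 n) (hy : y ∈ Finset.Icc 1 n)
    (hz : z ∈ Finset.Icc 1 n) (hxy : x < y) (hyz : y < z)
    (rxy : rnk a n x = rnk a n y) (ryz : rnk a n y = rnk a n z) : False :=
  hT x y z hx hy hz hxy hyz (dec_of_same_rnk hinj hx hy rxy hxy)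
    (dec_of_same_rnk hinj hy hz ryz hyz)

include hinj hT in
lemma no_three {u v w : ℕ} (hu : u ∈ Finset.Icc 1 n) (hv : v ∈ Finset.Icc 1 n)
    (hw : w ∈ Finset.Icc 1 n) (ruv : rnk a n u = rnk a n v) (ruw : rnk a n u = rnk a n w)
    (huv : u ≠ v) (hvw : v ≠ w) (huw : u ≠ w) : False := by
  rcases lt_trichotomy u v with h1 | h1 | h1
  · rcases lt_trichotomy v w with h2 | h2 | h2
    · exact tri_sorted hinj hT hu hv hw h1 h2 (by omega) (by omega)
    · exact hvw h2
    · rcases lt_trichotomy u w with h3 | h3 | h3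
      · exact tri_sorted hinj hT hu hw hv h3 h2 (by omega) (by omega)
      · exact huw h3
      · exact tri_sorted hinj hT hw hu hv h3 h1 (by omega) (by omega)
  · exact huv h1
  · rcases lt_trichotomy v w with h2 | h2 | h2
    · rcases lt_trichotomy u w with h3 | h3 | h3
      · exact tri_sorted hinj hT hv hu hw h1 h3 (by omega) (by omega)
      · exact huw h3
      · exact tri_sorted hinj hT hv hw hu h2 h3 (by omega) (by omega)
    · exact hvw h2
    · exact tri_sorted hinj hT hw hv hu h2 h1 (by omega) (by omega)

variable {κ : ℕ}
variable (hmax : ∀ T ⊆ Finset.Icc 1 n, Feasible a T → T.card ≤ κ)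

include hmax in
omit hinj hT in
lemma image_rnk {X : Finset ℕ} (hX : X ⊆ Finset.Icc 1 n) (hf : Feasible a X)
    (hc : X.card = κ) : X.image (rnk a n) = Finset.Icc 1 κ := by
  have hsub : X.image (rnk a n) ⊆ Finset.Icc 1 κ := by
    intro t ht
    obtain ⟨x, hx, rfl⟩ := Finset.mem_image.mp ht
    exact Finset.mem_Icc.mpr ⟨rnk_pos a n (hX hx), rnk_le a n hmax x⟩
  have hinjOn : Set.InjOn (rnk a n) ↑X := by
    intro p hp q hq hpq
    by_contra hne
    rcases lt_trichotomy p q with h | h | h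
    · have := rnk_lt a n (hX hp) (hX hq) h (hf p hp q hq h); omega
    · exact hne h
    · have := rnk_lt a n (hX hq) (hX hp) h (hf q hq p hp h); omega
  have hcard : (X.image (rnk a n)).card = κ := by
    rw [Finset.card_image_of_injOn hinjOn, hc]
  refine Finset.eq_of_subset_of_card_le hsub ?_
  rw [hcard, Nat.card_Icc]
  omega

lemma feasible_med3 {I X J : Finset ℕ} (hI : Feasible a I) (hX : Feasible a X)
    (hJ : Feasible a J) : Feasible a (med3 I X J) := by
  intro i hi j hj hij
  rw [mem_med3] at hi hj
  rcases hi with ⟨h1, h2⟩ | ⟨h1, h2⟩ | ⟨h1, h2⟩ <;>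
    rcases hj with ⟨g1, g2⟩ | ⟨g1, g2⟩ | ⟨g1, g2⟩
  · exact hI i h1 j g1 hij
  · exact hX i h2 j g1 hij
  · exact hI i h1 j g1 hij
  · exact hX i h1 j g2 hij
  · exact hX i h1 j g1 hij
  · exact hJ i h2 j g2 hij
  · exact hI i h1 j g1 hij
  · exact hJ i h2 j g2 hij
  · exact hI i h1 j g1 hij

include hinj hT hmax in
lemma med3_good {I X J : Finset ℕ}
    (hI : I ⊆ Finset.Icc 1 n ∧ Feasible a I ∧ I.card = κ)
    (hX : X ⊆ Finset.Icc 1 n ∧ Feasible a X ∧ X.card = κ)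
    (hJ : J ⊆ Finset.Icc 1 n ∧ Feasible a J ∧ J.card = κ) :
    med3 I X J ⊆ Finset.Icc 1 n ∧ Feasible a (med3 I X J) ∧ (med3 I X J).card = κ := by
  have hsub : med3 I X J ⊆ Finset.Icc 1 n := by
    intro e he
    rw [mem_med3] at he
    rcases he with ⟨h1, _⟩ | ⟨h1, _⟩ | ⟨h1, _⟩
    · exact hI.1 h1
    · exact hX.1 h1
    · exact hI.1 h1
  have hfeas := feasible_med3 hI.2.1 hX.2.1 hJ.2.1
  refine ⟨hsub, hfeas, le_antisymm (hmax _ hsub hfeas) ?_⟩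
  have himg : Finset.Icc 1 κ ⊆ (med3 I X J).image (rnk a n) := by
    intro t ht
    have h1 : t ∈ I.image (rnk a n) := by
      rw [image_rnk hmax hI.1 hI.2.1 hI.2.2]; exact ht
    have h2 : t ∈ X.image (rnk a n) := by
      rw [image_rnk hmax hX.1 hX.2.1 hX.2.2]; exact ht
    have h3 : t ∈ J.image (rnk a n) := by
      rw [image_rnk hmax hJ.1 hJ.2.1 hJ.2.2]; exact ht
    obtain ⟨u, hu, hru⟩ := Finset.mem_image.mp h1
    obtain ⟨v, hv, hrv⟩ := Finset.mem_image.mp h2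
    obtain ⟨w, hw, hrw⟩ := Finset.mem_image.mp h3
    by_cases huv : u = v
    · exact Finset.mem_image.mpr ⟨u, mem_med3.mpr (Or.inl ⟨hu, huv ▸ hv⟩), hru⟩
    · by_cases hvw : v = w
      · exact Finset.mem_image.mpr ⟨v, mem_med3.mpr (Or.inr (Or.inl ⟨hv, hvw ▸ hw⟩)), hrv⟩
      · by_cases huw : u = w
        · exact Finset.mem_image.mpr ⟨u, mem_med3.mpr (Or.inr (Or.inr ⟨hu, huw ▸ hw⟩)), hru⟩
        · exact absurd (no_three hinj hT (hI.1 hu) (hX.1 hv) (hJ.1 hw)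
            (by omega) (by omega) huv hvw huw) (fun h => h)
  calc κ = (Finset.Icc 1 κ).card := by rw [Nat.card_Icc]; omega
    _ ≤ ((med3 I X J).image (rnk a n)).card := Finset.card_le_card himg
    _ ≤ (med3 I X J).card := Finset.card_image_le

end Ctx

lemma recon_card {X Y : Finset ℕ} (h : ReconStep X Y) : Y.card = X.card := by
  obtain ⟨j, k, hj, hk, rfl⟩ := h
  rw [Finset.sdiff_singleton_eq_erase,
    Finset.card_erase_of_mem (Finset.mem_insert_of_mem hk),
    Finset.card_insert_of_notMem hj]
  omega

lemma step_of_sdiff {M1 M2 : Finset ℕ} {j k : ℕ}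
    (hc : M1.card = M2.card) (h1 : M1 \ M2 ⊆ {j, k}) (h2 : M2 \ M1 ⊆ {j, k}) :
    M1 = M2 ∨ ReconStep M1 M2 := by
  by_cases he : M2 \ M1 = ∅
  · left
    have hsub : M2 ⊆ M1 := by rwa [Finset.sdiff_eq_empty_iff_subset] at he
    exact (Finset.eq_of_subset_of_card_le hsub hc.le).symm
  · have hne2 : (M2 \ M1).Nonempty := Finset.nonempty_iff_ne_empty.mpr he
    obtain ⟨y, hy⟩ := hne2
    have hle1 : (M1 \ M2).card ≤ 1 := by
      by_contra hgt
      push_neg at hgt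
      have hjk : ({j, k} : Finset ℕ).card ≤ (M1 \ M2).card := by
        have := Finset.card_insert_le j ({k} : Finset ℕ)
        rw [Finset.card_singleton] at this
        omega
      have heq : M1 \ M2 = {j, k} := Finset.eq_of_subset_of_card_le h1 hjk
      have hyjk := h2 hy
      rw [Finset.mem_insert, Finset.mem_singleton] at hyjk
      have hyM1 : y ∉ M1 := (Finset.mem_sdiff.mp hy).2
      rcases hyjk with rfl | rfl
      · exact hyM1 (Finset.mem_sdiff.mp (heq ▸ (by simp : y ∈ ({y, k} : Finset ℕ)))).1
      · exact hyM1 (Finset.mem_sdiff.mp (heq ▸ (by simp : y ∈ ({j, y} : Finset ℕ)))).1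
    have hceq : (M1 \ M2).card = (M2 \ M1).card := Finset.card_sdiff_comm hc
    have hc2 : (M2 \ M1).card = 1 := by
      have := Finset.card_pos.mpr ⟨y, hy⟩
      omega
    have hc1 : (M1 \ M2).card = 1 := by omega
    obtain ⟨x, hxeq⟩ := Finset.card_eq_one.mp hc1
    obtain ⟨y', hyeq⟩ := Finset.card_eq_one.mp hc2
    have hx1 : x ∈ M1 ∧ x ∉ M2 := Finset.mem_sdiff.mp (hxeq ▸ Finset.mem_singleton_self x)
    have hy1 : y' ∈ M2 ∧ y' ∉ M1 := Finset.mem_sdiff.mp (hyeq ▸ Finset.mem_singleton_self y')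
    have hA : ∀ e, e ∈ M1 → e ∉ M2 → e = x := fun e he1 he2 =>
      Finset.mem_singleton.mp (hxeq ▸ Finset.mem_sdiff.mpr ⟨he1, he2⟩)
    have hB : ∀ e, e ∈ M2 → e ∉ M1 → e = y' := fun e he1 he2 =>
      Finset.mem_singleton.mp (hyeq ▸ Finset.mem_sdiff.mpr ⟨he1, he2⟩)
    right
    refine ⟨y', x, hy1.2, hx1.1, ?_⟩
    ext e
    rw [Finset.mem_sdiff, Finset.mem_insert, Finset.mem_singleton]
    constructor
    · intro heM2
      by_cases heM1 : e ∈ M1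
      · refine ⟨Or.inr heM1, ?_⟩
        intro hex
        exact (hex ▸ hx1.2) heM2
      · have := hB e heM2 heM1
        refine ⟨Or.inl this, ?_⟩
        intro hex
        rw [hex] at heM2
        exact hx1.2 heM2
    · rintro ⟨hor, hne⟩
      rcases hor with rfl | heM1
      · exact hy1.1
      · by_contra heM2
        exact hne (hA e heM1 heM2)

lemma med_step {I J X Y : Finset ℕ} (hXY : X = Y ∨ ReconStep X Y)
    (hc : (med3 I X J).card = (med3 I Y J).card) :
    med3 I X J = med3 I Y J ∨ ReconStep (med3 I X J) (med3 I Y J) := by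
  rcases hXY with rfl | ⟨j, k, hj, hk, rfl⟩
  · exact Or.inl rfl
  · set Y := insert j X \ {k} with hY
    have hagree : ∀ e, e ≠ j → e ≠ k → (e ∈ X ↔ e ∈ Y) := by
      intro e hej hek
      rw [hY, Finset.mem_sdiff, Finset.mem_insert, Finset.mem_singleton]
      constructor
      · intro h; exact ⟨Or.inr h, hek⟩
      · rintro ⟨hor, _⟩
        rcases hor with rfl | h
        · exact absurd rfl hej
        · exact h
    have hmagree : ∀ e, e ≠ j → e ≠ k → (e ∈ med3 I X J ↔ e ∈ med3 I Y J) := by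
      intro e hej hek
      rw [mem_med3, mem_med3, hagree e hej hek]
    apply step_of_sdiff hc (j := j) (k := k)
    · intro e he
      rw [Finset.mem_sdiff] at he
      rw [Finset.mem_insert, Finset.mem_singleton]
      by_contra hne
      push_neg at hne
      exact he.2 ((hmagree e hne.1 hne.2).mp he.1)
    · intro e he
      rw [Finset.mem_sdiff] at he
      rw [Finset.mem_insert, Finset.mem_singleton]
      by_contra hne
      push_neg at hne
      exact he.2 ((hmagree e hne.1 hne.2).mpr he.1)

section MedComp

variable {I J : Finset ℕ} {j k : ℕ}

lemma med3_JJ : med3 I J J = J := by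
  ext e; rw [mem_med3]; tauto

lemma med3_insert (hj : j ∉ I) (hk : k ∈ I) (hjJ : j ∈ J) (hkJ : k ∈ J) :
    med3 I (insert j I \ {k}) J = insert j I := by
  have hjk : j ≠ k := fun h => hj (h ▸ hk)
  ext e
  simp only [mem_med3, Finset.mem_sdiff, Finset.mem_insert, Finset.mem_singleton]
  by_cases hej : e = j
  · subst hej; tauto
  · by_cases hek : e = k
    · subst hek; tauto
    · tauto

lemma med3_eq_I (hj : j ∉ I) (hk : k ∈ I) (hjJ : j ∉ J) (hkJ : k ∈ J) :
    med3 I (insert j I \ {k}) J = I := by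
  have hjk : j ≠ k := fun h => hj (h ▸ hk)
  ext e
  simp only [mem_med3, Finset.mem_sdiff, Finset.mem_insert, Finset.mem_singleton]
  by_cases hej : e = j
  · subst hej; tauto
  · by_cases hek : e = k
    · subst hek; tauto
    · tauto

lemma med3_erase (hj : j ∉ I) (hk : k ∈ I) (hjJ : j ∉ J) (hkJ : k ∉ J) :
    med3 I (insert j I \ {k}) J = I.erase k := by
  have hjk : j ≠ k := fun h => hj (h ▸ hk)
  ext e
  simp only [mem_med3, Finset.mem_sdiff, Finset.mem_insert, Finset.mem_singleton, Finset.mem_erase]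
  by_cases hej : e = j
  · subst hej; tauto
  · by_cases hek : e = k
    · subst hek; tauto
    · tauto

lemma sdiff_step (hj : j ∉ I) (hk : k ∈ I) (hjJ : j ∈ J) :
    (insert j I \ {k}) \ J = (I \ J).erase k := by
  have hjk : j ≠ k := fun h => hj (h ▸ hk)
  ext e
  simp only [Finset.mem_sdiff, Finset.mem_insert, Finset.mem_singleton, Finset.mem_erase]
  by_cases hej : e = j
  · subst hej; tauto
  · tauto

end MedComp

section Main

variable {a : ℕ → ℕ} {n κ : ℕ}
variable (hinj : ∀ i ∈ Finset.Icc 1 n, ∀ j ∈ Finset.Icc 1 n, a i = a j → i = j)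
variable (hT : ∀ i j l, i ∈ Finset.Icc 1 n → j ∈ Finset.Icc 1 n → l ∈ Finset.Icc 1 n →
    i < j → j < l → a j < a i → a l < a j → False)
variable (hmax : ∀ T ⊆ Finset.Icc 1 n, Feasible a T → T.card ≤ κ)

include hinj hT hmax in
lemma main_lem : ∀ (ℓ : ℕ) (f : ℕ → Finset ℕ) (I J : Finset ℕ),
    (∀ i ≤ ℓ, f i ⊆ Finset.Icc 1 n ∧ Feasible a (f i) ∧ (f i).card = κ) →
    (∀ i < ℓ, f i = f (i + 1) ∨ ReconStep (f i) (f (i + 1))) →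
    f 0 = I → f ℓ = J →
    ∃ g, ReconSeq a (Finset.Icc 1 n) (I \ J).card g ∧ g 0 = I ∧ g ((I \ J).card) = J := by
  intro ℓ
  induction ℓ with
  | zero =>
    intro f I J hg hs h0 hl
    have hIJ : I = J := h0.symm.trans hl
    have hd : (I \ J).card = 0 := by rw [hIJ, Finset.sdiff_self, Finset.card_empty]
    refine ⟨fun _ => I, ⟨?_, ?_⟩, rfl, ?_⟩
    · intro i _
      have hGI := hg 0 le_rfl
      rw [h0] at hGI
      exact ⟨hGI.1, hGI.2.1⟩
    · intro i hi
      rw [hd] at hi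
      omega
    · rw [hd]; exact hIJ
  | succ m ih =>
    intro f I J hg hs h0 hl
    rcases hs 0 (Nat.succ_pos m) with hstall | hstep
    · refine ih (fun i => f (i + 1)) I J (fun i hi => hg (i + 1) (by omega))
        (fun i hi => hs (i + 1) (by omega)) (hstall.symm.trans h0) hl
    · obtain ⟨j, k, hj, hk, hf1⟩ := hstep
      rw [h0] at hj hk hf1
      have hGI := hg 0 (by omega); rw [h0] at hGI
      have hGJ := hg (m + 1) (by omega); rw [hl] at hGJ
      have hG1 := hg 1 (by omega)
      have hMg := med3_good hinj hT hmax hGI hG1 hGJ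
      by_cases hjJ : j ∈ J
      · by_cases hkJ : k ∈ J
        · exfalso
          have hMeq : med3 I (f 1) J = insert j I := by
            rw [hf1]; exact med3_insert hj hk hjJ hkJ
          have := hMg.2.2
          rw [hMeq, Finset.card_insert_of_notMem hj, hGI.2.2] at this
          omega
        · -- Case A: move toward J
          have hstep1 : ReconStep I (f 1) := ⟨j, k, hj, hk, hf1⟩
          have hkIJ : k ∈ I \ J := Finset.mem_sdiff.mpr ⟨hk, hkJ⟩
          have hsd : (I \ J).card = (f 1 \ J).card + 1 := by
            have h1 : f 1 \ J = (I \ J).erase k := by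
              rw [hf1]; exact sdiff_step hj hk hjJ
            rw [h1, Finset.card_erase_of_mem hkIJ]
            have : 0 < (I \ J).card := Finset.card_pos.mpr ⟨k, hkIJ⟩
            omega
          obtain ⟨g, hgRS, hg0, hgl⟩ := ih (fun i => f (i + 1)) (f 1) J
            (fun i hi => hg (i + 1) (by omega)) (fun i hi => hs (i + 1) (by omega)) rfl hl
          refine ⟨fun i => if i = 0 then I else g (i - 1), ⟨?_, ?_⟩, by simp, ?_⟩
          · intro i hi
            by_cases h : i = 0
            · simp only [h, if_pos rfl]
              exact ⟨hGI.1, hGI.2.1⟩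
            · simp only [if_neg h]
              exact hgRS.1 (i - 1) (by omega)
          · intro i hi
            by_cases h : i = 0
            · subst h
              simp only [if_pos rfl, if_neg (by omega : (1 : ℕ) ≠ 0)]
              rw [hg0]
              exact hstep1
            · obtain ⟨i', rfl⟩ : ∃ i', i = i' + 1 := ⟨i - 1, by omega⟩
              simp only [if_neg (by omega : i' + 1 ≠ 0), if_neg (by omega : i' + 2 ≠ 0)]
              have : i' + 2 - 1 = i' + 1 := by omega
              rw [this]
              have : i' + 1 - 1 = i' := by omega
              rw [this]
              exact hgRS.2 i' (by omega)
          · have hne : (I \ J).card ≠ 0 := by omega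
            simp only [if_neg hne]
            rw [hsd]
            simpa using hgl
      · by_cases hkJ : k ∈ J
        · -- Case B: median contraction
          have hM : med3 I (f 1) J = I := by
            rw [hf1]; exact med3_eq_I hj hk hjJ hkJ
          refine ih (fun i => med3 I (f (i + 1)) J) I J ?_ ?_ hM ?_
          · intro i hi
            exact med3_good hinj hT hmax hGI (hg (i + 1) (by omega)) hGJ
          · intro i hi
            have hc1 := (med3_good hinj hT hmax hGI (hg (i + 1) (by omega)) hGJ).2.2
            have hc2 := (med3_good hinj hT hmax hGI (hg (i + 2) (by omega)) hGJ).2.2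
            exact med_step (hs (i + 1) (by omega)) (by rw [hc1, hc2])
          · show med3 I (f (m + 1)) J = J
            rw [hl]; exact med3_JJ
        · exfalso
          have hMeq : med3 I (f 1) J = I.erase k := by
            rw [hf1]; exact med3_erase hj hk hjJ hkJ
          have hpos : 0 < I.card := Finset.card_pos.mpr ⟨k, hk⟩
          have := hMg.2.2
          rw [hMeq, Finset.card_erase_of_mem hk, hGI.2.2] at this
          omega

end Main

/-- Let `a₁, …, aₙ` be distinct integers between `1` and `n` whose permutation
graph is bipartite (2-colorable), and let `I` and `J` be maximum feasible
sets.  If there is a reconfiguration sequence between `I` and `J`, then there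
is one of length exactly `|I \ J|`. -/
theorem stmt12 (n : ℕ) (a : ℕ → ℕ) (hn : 0 < n)
    (hmem : ∀ i ∈ Finset.Icc 1 n, a i ∈ Finset.Icc 1 n)
    (hinj : ∀ i ∈ Finset.Icc 1 n, ∀ j ∈ Finset.Icc 1 n, a i = a j → i = j)
    (hbip : (permGraph a n).Colorable 2)
    (I J : Finset ℕ) (hI : MaxFeasibleIcc a n I) (hJ : MaxFeasibleIcc a n J)
    (h : ∃ ℓ f, ReconSeq a (Finset.Icc 1 n) ℓ f ∧ f 0 = I ∧ f ℓ = J) :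
    ∃ f, ReconSeq a (Finset.Icc 1 n) (I \ J).card f ∧
      f 0 = I ∧ f ((I \ J).card) = J := by
  classical
  obtain ⟨ℓ, f, hRS, h0, hl⟩ := h
  set κ := I.card with hκ
  have hmax : ∀ T ⊆ Finset.Icc 1 n, Feasible a T → T.card ≤ κ := hI.2.2
  have hT : ∀ i j l, i ∈ Finset.Icc 1 n → j ∈ Finset.Icc 1 n → l ∈ Finset.Icc 1 n →
      i < j → j < l → a j < a i → a l < a j → False := by
    intro i j l hi hj hl' hij hjl h1 h2
    obtain ⟨C⟩ := hbip
    have e1 : (permGraph a n).Adj i j := ⟨hi, hj, Or.inl ⟨hij, h1⟩⟩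
    have e2 : (permGraph a n).Adj j l := ⟨hj, hl', Or.inl ⟨hjl, h2⟩⟩
    have e3 : (permGraph a n).Adj i l := ⟨hi, hl', Or.inl ⟨hij.trans hjl, h2.trans h1⟩⟩
    have key : ∀ x y : Fin 2, x ≠ y → x.val + y.val = 1 := by decide
    have n1 := key _ _ (C.valid e1)
    have n2 := key _ _ (C.valid e2)
    have n3 := key _ _ (C.valid e3)
    omega
  have hcard : ∀ i ≤ ℓ, (f i).card = κ := by
    intro i
    induction i with
    | zero => intro _; rw [h0]
    | succ p ihp =>
      intro hp
      rw [recon_card (hRS.2 p (by omega))]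
      exact ihp (by omega)
  exact main_lem hinj hT hmax ℓ f I J
    (fun i hi => ⟨(hRS.1 i hi).1, (hRS.1 i hi).2, hcard i hi⟩)
    (fun i hi => Or.inr (hRS.2 i hi)) h0 hl
end

section
/- Let A be a sequence of n distinct integers between 1 and n whose permutation graph G_A is bipartite, and let I and J be maximum feasible sets for A such that the instance (A, I, J) has no forbidden pairs. Let a_i and a_j be the two elements of the leftmost mixed pile P_t, with i ∈ I and j ∈ J. Then at least one of (I \ {i}) ∪ {j} and (J \ {j}) ∪ {i} is a feasible set for A. -/
/-- With respect to maximum feasible sets `I` and `J`, a pile is *mixed* if it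
contains exactly two elements `a i` and `a j` with `i ∈ I` and `j ∈ J`
(and `i ≠ j`). -/
def MixedPile (I J : Finset ℕ) (p : List ℕ) : Prop :=
  p.length = 2 ∧ ∃ i j : ℕ, i ≠ j ∧ i ∈ p ∧ j ∈ p ∧ i ∈ I ∧ j ∈ J

/-- The instance `(A, I, J)` has a *forbidden pair*: two distinct mixed piles
whose four vertices induce a cycle of length `4` in the permutation graph. -/
def HasForbiddenPair (a : ℕ → ℕ) (n : ℕ) (I J : Finset ℕ) : Prop :=
  ∃ t t' : ℕ, t ≠ t' ∧ ∃ p p' : List ℕ,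
    (pilesOf a ((List.range n).map (· + 1)))[t]? = some p ∧
    (pilesOf a ((List.range n).map (· + 1)))[t']? = some p' ∧
    ∃ i j i' j' : ℕ,
      (i ≠ j ∧ i ∈ p ∧ j ∈ p ∧ i ∈ I ∧ j ∈ J ∧ p.length = 2) ∧
      (i' ≠ j' ∧ i' ∈ p' ∧ j' ∈ p' ∧ i' ∈ I ∧ j' ∈ J ∧ p'.length = 2) ∧
      -- the four vertices are distinct and induce a 4-cycle i - j - i' - j' - i
      i ≠ i' ∧ j ≠ j' ∧
      (permGraph a n).Adj i j ∧ (permGraph a n).Adj j i' ∧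
      (permGraph a n).Adj i' j' ∧ (permGraph a n).Adj j' i ∧
      ¬ (permGraph a n).Adj i i' ∧ ¬ (permGraph a n).Adj j j'

namespace Stmt14Aux

lemma headI_mem {l : List ℕ} (h : l ≠ []) : l.headI ∈ l := by
  cases l with
  | nil => exact absurd rfl h
  | cons x xs => exact List.mem_cons_self

lemma place_spec (a : ℕ → ℕ) (x : ℕ) : ∀ ps : List (List ℕ),
    ((∀ q ∈ ps, ¬ a x < a q.headI) ∧ place a ps x = ps ++ [[x]]) ∨
    (∃ l q r, (∀ q' ∈ l, ¬ a x < a q'.headI) ∧ a x < a q.headI ∧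
      ps = l ++ q :: r ∧ place a ps x = l ++ (x :: q) :: r)
  | [] => Or.inl ⟨by simp, rfl⟩
  | p :: ps => by
    by_cases h : a x < a p.headI
    · exact Or.inr ⟨[], p, ps, by simp, h, rfl, by simp [place, h]⟩
    · rcases place_spec a x ps with ⟨hl, hpl⟩ | ⟨l, q, r, hl, hq, hps, hpl⟩
      · refine Or.inl ⟨?_, by simp [place, h, hpl]⟩
        intro q hq
        rcases List.mem_cons.1 hq with rfl | hq
        · exact h
        · exact hl q hq
      · refine Or.inr ⟨p :: l, q, r, ?_, hq, by rw [hps]; rfl, by simp [place, h, hpl]⟩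
        intro q' hq'
        rcases List.mem_cons.1 hq' with rfl | hq'
        · exact h
        · exact hl q' hq'

def Inv (a : ℕ → ℕ) (m : ℕ) (ps : List (List ℕ)) : Prop :=
  (∀ q ∈ ps, q ≠ []) ∧
  (∀ q ∈ ps, ∀ x ∈ q, x ∈ Finset.Icc 1 m) ∧
  (∀ x ∈ Finset.Icc 1 m, ∃ q ∈ ps, x ∈ q) ∧
  ps.Pairwise (fun q q' => ∀ x ∈ q, x ∉ q') ∧
  (∀ q ∈ ps, q.Pairwise (fun x y => y < x ∧ a x < a y)) ∧
  ps.Pairwise (fun q q' => a q.headI < a q'.headI) ∧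
  ps.Pairwise (fun q q' => ∀ x ∈ q', ∃ y ∈ q, y < x ∧ a y < a x)

lemma inv_step {a : ℕ → ℕ} {m : ℕ} {ps : List (List ℕ)} (h : Inv a m ps)
    (hd : ∀ y ∈ Finset.Icc 1 m, a y ≠ a (m + 1)) :
    Inv a (m + 1) (place a ps (m + 1)) := by
  obtain ⟨h1, h2, h3, h4, h5, h6, h7⟩ := h
  -- elements of old piles are ≤ m
  have hle : ∀ q ∈ ps, ∀ y ∈ q, y ≤ m := by
    intro q hq y hy
    exact (Finset.mem_Icc.1 (h2 q hq y hy)).2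
  have hIccmono : ∀ y : ℕ, y ∈ Finset.Icc 1 m → y ∈ Finset.Icc 1 (m + 1) := by
    intro y hy; rw [Finset.mem_Icc] at hy ⊢; omega
  have hx1 : (m + 1) ∈ Finset.Icc 1 (m + 1) := by rw [Finset.mem_Icc]; omega
  -- tops of "passed" piles are strictly below a (m+1)
  have htop : ∀ q ∈ ps, ¬ a (m + 1) < a q.headI → a q.headI < a (m + 1) := by
    intro q hq hlt
    have hIcc : q.headI ∈ Finset.Icc 1 m := h2 q hq _ (headI_mem (h1 q hq))
    exact lt_of_le_of_ne (not_lt.1 hlt) (hd _ hIcc)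
  rcases place_spec a (m + 1) ps with ⟨hl, hpl⟩ | ⟨l, q₀, r, hl, hq₀, hps, hpl⟩
  · rw [hpl]
    refine ⟨?_, ?_, ?_, ?_, ?_, ?_, ?_⟩
    · intro q hq
      rcases List.mem_append.1 hq with hq | hq
      · exact h1 q hq
      · simp only [List.mem_singleton] at hq; subst hq; simp
    · intro q hq y hy
      rcases List.mem_append.1 hq with hq | hq
      · exact hIccmono _ (h2 q hq y hy)
      · simp only [List.mem_singleton] at hq; subst hq
        simp only [List.mem_singleton] at hy; subst hy; exact hx1
    · intro y hy
      rw [Finset.mem_Icc] at hy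
      by_cases hym : y ≤ m
      · obtain ⟨q, hq, hyq⟩ := h3 y (Finset.mem_Icc.2 ⟨hy.1, hym⟩)
        exact ⟨q, List.mem_append_left _ hq, hyq⟩
      · have : y = m + 1 := by omega
        subst this
        exact ⟨[m + 1], List.mem_append_right _ (by simp), by simp⟩
    · rw [List.pairwise_append]
      refine ⟨h4, by simp, ?_⟩
      intro q hq b hb y hy
      simp only [List.mem_singleton] at hb; subst hb
      simp only [List.mem_singleton]
      have := hle q hq y hy; omega
    · intro q hq
      rcases List.mem_append.1 hq with hq | hq
      · exact h5 q hq
      · simp only [List.mem_singleton] at hq; subst hq; simp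
    · rw [List.pairwise_append]
      refine ⟨h6, by simp, ?_⟩
      intro q hq b hb
      simp only [List.mem_singleton] at hb; subst hb
      simpa using htop q hq (hl q hq)
    · rw [List.pairwise_append]
      refine ⟨h7, by simp, ?_⟩
      intro q hq b hb y hy
      simp only [List.mem_singleton] at hb; subst hb
      simp only [List.mem_singleton] at hy; subst hy
      refine ⟨q.headI, headI_mem (h1 q hq), ?_, htop q hq (hl q hq)⟩
      have := hle q hq _ (headI_mem (h1 q hq)); omega
  · -- insert case
    subst hps
    rw [hpl]
    have hq₀ps : q₀ ∈ l ++ q₀ :: r := List.mem_append_right _ (List.mem_cons_self)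
    have hq₀ne := h1 q₀ hq₀ps
    -- value of m+1 below every element of q₀
    have hvq₀ : ∀ y ∈ q₀, a (m + 1) < a y := by
      intro y hy
      cases q₀ with
      | nil => simp at hy
      | cons b tb =>
        rcases List.mem_cons.1 hy with rfl | hy
        · exact hq₀
        · have := (List.pairwise_cons.1 (h5 _ hq₀ps)).1 y hy
          exact lt_trans hq₀ this.2
    have memps : ∀ q ∈ l, q ∈ l ++ q₀ :: r := fun q hq => List.mem_append_left _ hq
    have memps' : ∀ q ∈ r, q ∈ l ++ q₀ :: r :=
      fun q hq => List.mem_append_right _ (List.mem_cons_of_mem _ hq)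
    rw [List.pairwise_append] at h4 h6 h7
    obtain ⟨h4l, h4qr, h4x⟩ := h4
    obtain ⟨h6l, h6qr, h6x⟩ := h6
    obtain ⟨h7l, h7qr, h7x⟩ := h7
    rw [List.pairwise_cons] at h4qr h6qr h7qr
    obtain ⟨h4q, h4r⟩ := h4qr
    obtain ⟨h6q, h6r⟩ := h6qr
    obtain ⟨h7q, h7r⟩ := h7qr
    refine ⟨?_, ?_, ?_, ?_, ?_, ?_, ?_⟩
    · intro q hq
      rcases List.mem_append.1 hq with hq | hq
      · exact h1 q (memps q hq)
      · rcases List.mem_cons.1 hq with rfl | hq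
        · simp
        · exact h1 q (memps' q hq)
    · intro q hq y hy
      rcases List.mem_append.1 hq with hq | hq
      · exact hIccmono _ (h2 q (memps q hq) y hy)
      · rcases List.mem_cons.1 hq with rfl | hq
        · rcases List.mem_cons.1 hy with rfl | hy
          · exact hx1
          · exact hIccmono _ (h2 q₀ hq₀ps y hy)
        · exact hIccmono _ (h2 q (memps' q hq) y hy)
    · intro y hy
      rw [Finset.mem_Icc] at hy
      by_cases hym : y ≤ m
      · obtain ⟨q, hq, hyq⟩ := h3 y (Finset.mem_Icc.2 ⟨hy.1, hym⟩)
        rcases List.mem_append.1 hq with hq | hq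
        · exact ⟨q, List.mem_append_left _ hq, hyq⟩
        · rcases List.mem_cons.1 hq with rfl | hq
          · exact ⟨(m + 1) :: q, List.mem_append_right _ (List.mem_cons_self),
              List.mem_cons_of_mem _ hyq⟩
          · exact ⟨q, List.mem_append_right _ (List.mem_cons_of_mem _ hq), hyq⟩
      · have : y = m + 1 := by omega
        subst this
        exact ⟨(m + 1) :: q₀, List.mem_append_right _ (List.mem_cons_self),
          List.mem_cons_self⟩
    · rw [List.pairwise_append, List.pairwise_cons]
      refine ⟨h4l, ⟨?_, h4r⟩, ?_⟩
      · intro b hb y hy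
        rcases List.mem_cons.1 hy with rfl | hy
        · intro hmem
          have := hle b (memps' b hb) _ hmem; omega
        · exact h4q b hb y hy
      · intro q hq b hb
        rcases List.mem_cons.1 hb with rfl | hb
        · intro y hy hmem
          rcases List.mem_cons.1 hmem with rfl | hmem
          · have := hle q (memps q hq) _ hy; omega
          · exact h4x q hq q₀ (List.mem_cons_self) y hy hmem
        · exact h4x q hq b (List.mem_cons_of_mem _ hb)
    · intro q hq
      rcases List.mem_append.1 hq with hq | hq
      · exact h5 q (memps q hq)
      · rcases List.mem_cons.1 hq with rfl | hq
        · rw [List.pairwise_cons]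
          refine ⟨?_, h5 q₀ hq₀ps⟩
          intro y hy
          have := hle q₀ hq₀ps y hy
          exact ⟨by omega, hvq₀ y hy⟩
        · exact h5 q (memps' q hq)
    · rw [List.pairwise_append, List.pairwise_cons]
      have hhead : ((m + 1) :: q₀).headI = m + 1 := rfl
      refine ⟨h6l, ⟨?_, h6r⟩, ?_⟩
      · intro b hb
        rw [hhead]
        exact lt_trans hq₀ (h6q b hb)
      · intro q hq b hb
        rcases List.mem_cons.1 hb with rfl | hb
        · rw [hhead]
          exact htop q (memps q hq) (hl q hq)
        · exact h6x q hq b (List.mem_cons_of_mem _ hb)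
    · rw [List.pairwise_append, List.pairwise_cons]
      refine ⟨h7l, ⟨?_, h7r⟩, ?_⟩
      · intro b hb y hy
        obtain ⟨z, hz, hz2⟩ := h7q b hb y hy
        exact ⟨z, List.mem_cons_of_mem _ hz, hz2⟩
      · intro q hq b hb
        rcases List.mem_cons.1 hb with rfl | hb
        · intro y hy
          rcases List.mem_cons.1 hy with rfl | hy
          · refine ⟨q.headI, headI_mem (h1 q (memps q hq)), ?_,
              htop q (memps q hq) (hl q hq)⟩
            have := hle q (memps q hq) _ (headI_mem (h1 q (memps q hq))); omega
          · exact h7x q hq q₀ (List.mem_cons_self) y hy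
        · exact h7x q hq b (List.mem_cons_of_mem _ hb)

lemma inv_pilesOf (a : ℕ → ℕ) (n : ℕ)
    (hinj : ∀ i ∈ Finset.Icc 1 n, ∀ j ∈ Finset.Icc 1 n, a i = a j → i = j) :
    ∀ m, m ≤ n → Inv a m (pilesOf a ((List.range m).map (· + 1))) := by
  intro m
  induction m with
  | zero =>
    intro _
    refine ⟨by simp [pilesOf], by simp [pilesOf], ?_, by simp [pilesOf],
      by simp [pilesOf], by simp [pilesOf], by simp [pilesOf]⟩
    intro x hx
    rw [Finset.mem_Icc] at hx; omega
  | succ m ih =>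
    intro hmn
    have heq : pilesOf a ((List.range (m + 1)).map (· + 1)) =
        place a (pilesOf a ((List.range m).map (· + 1))) (m + 1) := by
      rw [List.range_succ, List.map_append]
      simp [pilesOf, List.foldl_append]
    rw [heq]
    refine inv_step (ih (by omega)) ?_
    intro y hy hya
    rw [Finset.mem_Icc] at hy
    have hyn : y ∈ Finset.Icc 1 n := Finset.mem_Icc.2 ⟨hy.1, by omega⟩
    have hmn' : m + 1 ∈ Finset.Icc 1 n := Finset.mem_Icc.2 ⟨by omega, hmn⟩
    have := hinj y hyn (m + 1) hmn' hya
    omega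

variable {a : ℕ → ℕ} {n : ℕ} {PS : List (List ℕ)}

lemma pairwise_get? {R : List ℕ → List ℕ → Prop} {l : List (List ℕ)} (h : l.Pairwise R)
    {s s' : ℕ} {q q' : List ℕ} (hs : l[s]? = some q) (hs' : l[s']? = some q')
    (hlt : s < s') : R q q' := by
  rw [List.getElem?_eq_some_iff] at hs hs'
  obtain ⟨hl1, rfl⟩ := hs
  obtain ⟨hl2, rfl⟩ := hs'
  exact List.pairwise_iff_getElem.1 h s s' hl1 hl2 hlt

lemma exists_pile (hin : Inv a n PS) {x : ℕ} (hx : x ∈ Finset.Icc 1 n) :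
    ∃ (s : ℕ) (q : List ℕ), PS[s]? = some q ∧ x ∈ q := by
  obtain ⟨q, hq, hxq⟩ := hin.2.2.1 x hx
  obtain ⟨⟨s, hs⟩, rfl⟩ := List.mem_iff_get.1 hq
  exact ⟨s, _, List.getElem?_eq_getElem hs, hxq⟩

lemma pile_unique (hin : Inv a n PS) {s s' : ℕ} {q q' : List ℕ} {x : ℕ}
    (hs : PS[s]? = some q) (hs' : PS[s']? = some q')
    (hx : x ∈ q) (hx' : x ∈ q') : s = s' := by
  by_contra h
  rcases lt_or_gt_of_ne h with hlt | hlt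
  · exact pairwise_get? hin.2.2.2.1 hs hs' hlt x hx hx'
  · exact pairwise_get? hin.2.2.2.1 hs' hs hlt x hx' hx

lemma pile_adj (hin : Inv a n PS) {q : List ℕ} (hq : q ∈ PS) {x y : ℕ}
    (hx : x ∈ q) (hy : y ∈ q) (hne : x ≠ y) :
    (x < y ∧ a y < a x) ∨ (y < x ∧ a x < a y) := by
  have hp := hin.2.2.2.2.1 q hq
  have hp' : q.Pairwise (fun x y => (x < y ∧ a y < a x) ∨ (y < x ∧ a x < a y)) :=
    hp.imp (fun h => Or.inr h)
  have hsymm : Symmetric (fun x y : ℕ => (x < y ∧ a y < a x) ∨ (y < x ∧ a x < a y)) := by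
    intro u v h; exact h.symm
  haveI : Std.Symm (fun x y : ℕ => (x < y ∧ a y < a x) ∨ (y < x ∧ a x < a y)) :=
    ⟨fun u v h => hsymm h⟩
  exact hp'.forall hx hy hne

lemma permGraph_adj {x y : ℕ} : (permGraph a n).Adj x y ↔
    (x ∈ Finset.Icc 1 n ∧ y ∈ Finset.Icc 1 n ∧
      ((x < y ∧ a y < a x) ∨ (y < x ∧ a x < a y))) := Iff.rfl

lemma pile_len_le2 (hbip : (permGraph a n).Colorable 2) (hin : Inv a n PS)
    {q : List ℕ} (hq : q ∈ PS) : q.length ≤ 2 := by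
  by_contra h
  push_neg at h
  obtain ⟨x, y, z, w, rfl⟩ : ∃ x y z w, q = x :: y :: z :: w := by
    match q, h with
    | x :: y :: z :: w, _ => exact ⟨x, y, z, w, rfl⟩
  have hp := hin.2.2.2.2.1 _ hq
  rw [List.pairwise_cons] at hp
  obtain ⟨hx, hp⟩ := hp
  rw [List.pairwise_cons] at hp
  obtain ⟨hy, _⟩ := hp
  have hxy := hx y (by simp)
  have hxz := hx z (by simp)
  have hyz := hy z (by simp)
  have hIcc : ∀ u ∈ (x :: y :: z :: w), u ∈ Finset.Icc 1 n := hin.2.1 _ hq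
  have axy : (permGraph a n).Adj x y :=
    ⟨hIcc x (by simp), hIcc y (by simp), Or.inr hxy⟩
  have axz : (permGraph a n).Adj x z :=
    ⟨hIcc x (by simp), hIcc z (by simp), Or.inr hxz⟩
  have ayz : (permGraph a n).Adj y z :=
    ⟨hIcc y (by simp), hIcc z (by simp), Or.inr hyz⟩
  obtain ⟨C⟩ := hbip
  have h1 := C.valid axy
  have h2 := C.valid axz
  have h3 := C.valid ayz
  have : ∀ u v w : Fin 2, u ≠ v → u ≠ w → v ≠ w → False := by decide
  exact this _ _ _ h1 h2 h3

lemma pile_nodup (hin : Inv a n PS) {q : List ℕ} (hq : q ∈ PS) : q.Nodup :=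
  (hin.2.2.2.2.1 q hq).imp (fun h => (h.1.ne'))

lemma two_mem_len (hbip : (permGraph a n).Colorable 2) (hin : Inv a n PS)
    {q : List ℕ} (hq : q ∈ PS) {x y : ℕ} (hx : x ∈ q) (hy : y ∈ q) (hne : x ≠ y) :
    q.length = 2 := by
  refine le_antisymm (pile_len_le2 hbip hin hq) ?_
  have hsub : ({x, y} : Finset ℕ) ⊆ q.toFinset := by
    intro z hz
    rw [List.mem_toFinset]
    rcases Finset.mem_insert.1 hz with rfl | hz
    · exact hx
    · rw [Finset.mem_singleton] at hz; subst hz; exact hy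
  calc 2 = ({x, y} : Finset ℕ).card := by rw [Finset.card_insert_of_notMem (by simpa using hne), Finset.card_singleton]
    _ ≤ q.toFinset.card := Finset.card_le_card hsub
    _ = q.length := List.toFinset_card_of_nodup (pile_nodup hin hq)

lemma mem_pair {p : List ℕ} (hlen : p.length = 2) {i j : ℕ} (hij : i ≠ j)
    (hi : i ∈ p) (hj : j ∈ p) : ∀ z ∈ p, z = i ∨ z = j := by
  have hsub : ({i, j} : Finset ℕ) ⊆ p.toFinset := by
    intro z hz
    rw [List.mem_toFinset]
    rcases Finset.mem_insert.1 hz with rfl | hz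
    · exact hi
    · rw [Finset.mem_singleton] at hz; subst hz; exact hj
  have hcard : p.toFinset.card ≤ ({i, j} : Finset ℕ).card := by
    rw [Finset.card_insert_of_notMem (by simpa using hij), Finset.card_singleton]
    calc p.toFinset.card ≤ p.length := List.toFinset_card_le p
      _ = 2 := hlen
  have heq := Finset.eq_of_subset_of_card_le hsub hcard
  intro z hz
  have : z ∈ ({i, j} : Finset ℕ) := heq ▸ List.mem_toFinset.2 hz
  rcases Finset.mem_insert.1 this with rfl | hz'
  · exact Or.inl rfl
  · exact Or.inr (Finset.mem_singleton.1 hz')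

open Classical in
noncomputable def pidx (PS : List (List ℕ)) (x : ℕ) : ℕ :=
  if h : ∃ s, ∃ q, PS[s]? = some q ∧ x ∈ q then h.choose else 0

lemma pidx_spec (hin : Inv a n PS) {x : ℕ} (hx : x ∈ Finset.Icc 1 n) :
    ∃ q, PS[(pidx PS x)]? = some q ∧ x ∈ q := by
  have h : ∃ s, ∃ q, PS[s]? = some q ∧ x ∈ q := exists_pile hin hx
  rw [pidx]
  rw [dif_pos h]
  exact h.choose_spec

lemma pidx_lt (hin : Inv a n PS) {x : ℕ} (hx : x ∈ Finset.Icc 1 n) :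
    pidx PS x < PS.length := by
  obtain ⟨q, hq, _⟩ := pidx_spec hin hx
  exact (List.getElem?_eq_some_iff.1 hq).1

lemma pidx_inj (hin : Inv a n PS) {I : Finset ℕ} (hF : Feasible a I)
    (hsub : I ⊆ Finset.Icc 1 n) {x y : ℕ} (hx : x ∈ I) (hy : y ∈ I)
    (hxy : pidx PS x = pidx PS y) : x = y := by
  obtain ⟨q, hq, hxq⟩ := pidx_spec hin (hsub hx)
  obtain ⟨q', hq', hyq⟩ := pidx_spec hin (hsub hy)
  rw [hxy, hq'] at hq
  obtain rfl : q' = q := by injection hq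
  by_contra hne
  rcases pile_adj hin (List.mem_of_getElem? hq') hxq hyq hne with ⟨h1, h2⟩ | ⟨h1, h2⟩
  · exact absurd (hF x hx y hy h1) (lt_asymm h2)
  · exact absurd (hF y hy x hx h1) (lt_asymm h2)

lemma card_le_piles (hin : Inv a n PS) {I : Finset ℕ} (hF : Feasible a I)
    (hsub : I ⊆ Finset.Icc 1 n) : I.card ≤ PS.length := by
  have := Finset.card_le_card_of_injOn (pidx PS)
    (fun x hx => Finset.mem_range.2 (pidx_lt hin (hsub hx)))
    (fun x hx y hy hxy => pidx_inj hin hF hsub hx hy hxy)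
  simpa using this

lemma chain_lem (hin : Inv a n PS) :
    ∀ s q, PS[s]? = some q → ∀ x ∈ q, ∃ S : Finset ℕ,
      S.card = s + 1 ∧ S ⊆ Finset.Icc 1 n ∧ Feasible a S ∧
      ∀ y ∈ S, y ≤ x ∧ a y ≤ a x := by
  intro s
  induction s with
  | zero =>
    intro q hq x hx
    refine ⟨{x}, Finset.card_singleton x, ?_, ?_, ?_⟩
    · intro z hz
      rw [Finset.mem_singleton] at hz
      exact hz ▸ hin.2.1 q (List.mem_of_getElem? hq) x hx
    · intro u hu v hv huv
      rw [Finset.mem_singleton] at hu hv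
      subst hu; subst hv; exact absurd huv (lt_irrefl _)
    · intro y hy
      rw [Finset.mem_singleton] at hy; subst hy; exact ⟨le_refl _, le_refl _⟩
  | succ s ih =>
    intro q hq x hx
    have hs1 : s + 1 < PS.length := (List.getElem?_eq_some_iff.1 hq).1
    have hs : s < PS.length := by omega
    set q' := PS.get ⟨s, hs⟩ with hq'def
    have hq' : PS[s]? = some q' := List.getElem?_eq_getElem hs
    obtain ⟨y, hyq', hyx, hayx⟩ :=
      pairwise_get? hin.2.2.2.2.2.2 hq' hq (by omega) x hx
    obtain ⟨S', hcard, hsub, hfeas, hbd⟩ := ih q' hq' y hyq'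
    have hxS' : x ∉ S' := by
      intro hmem
      have := (hbd x hmem).1; omega
    refine ⟨insert x S', ?_, ?_, ?_, ?_⟩
    · rw [Finset.card_insert_of_notMem hxS', hcard]
    · intro z hz
      rcases Finset.mem_insert.1 hz with rfl | hz
      · exact hin.2.1 q (List.mem_of_getElem? hq) z hx
      · exact hsub hz
    · intro u hu v hv huv
      rcases Finset.mem_insert.1 hu with hux | hu'
      · rcases Finset.mem_insert.1 hv with hvx | hv'
        · rw [hux, hvx] at huv; exact absurd huv (lt_irrefl _)
        · rw [hux] at huv
          have h1 := (hbd v hv').1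
          omega
      · rcases Finset.mem_insert.1 hv with hvx | hv'
        · rw [hvx]
          exact lt_of_le_of_lt (hbd u hu').2 hayx
        · exact hfeas u hu' v hv' huv
    · intro z hz
      rcases Finset.mem_insert.1 hz with hzx | hz'
      · rw [hzx]; exact ⟨le_refl _, le_refl _⟩
      · have := hbd z hz'
        exact ⟨by omega, le_trans this.2 (le_of_lt hayx)⟩

lemma card_eq_piles (hn : 0 < n) (hin : Inv a n PS) {I : Finset ℕ}
    (hI : MaxFeasibleIcc a n I) : I.card = PS.length := by
  refine le_antisymm (card_le_piles hin hI.2.1 hI.1) ?_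
  have h1 : (1 : ℕ) ∈ Finset.Icc 1 n := Finset.mem_Icc.2 ⟨le_refl _, hn⟩
  obtain ⟨s₀, q₀, hq₀, _⟩ := exists_pile hin h1
  have hL : 0 < PS.length := lt_of_le_of_lt (Nat.zero_le _) (List.getElem?_eq_some_iff.1 hq₀).1
  have hlt : PS.length - 1 < PS.length := by omega
  set q := PS.get ⟨PS.length - 1, hlt⟩ with hqdef
  have hq : PS[(PS.length - 1)]? = some q := List.getElem?_eq_getElem hlt
  have hqne : q ≠ [] := hin.1 q (List.mem_of_getElem? hq)
  obtain ⟨S, hcard, hsub, hfeas, _⟩ := chain_lem hin _ q hq q.headI (headI_mem hqne)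
  have := hI.2.2 S hsub hfeas
  omega

lemma exists_in_pile (hn : 0 < n) (hin : Inv a n PS) {I : Finset ℕ}
    (hI : MaxFeasibleIcc a n I) {s : ℕ} {q : List ℕ}
    (hq : PS[s]? = some q) : ∃ x ∈ I, x ∈ q := by
  have hcard := card_eq_piles hn hin hI
  have hs : s < PS.length := (List.getElem?_eq_some_iff.1 hq).1
  have hsurj := Finset.surj_on_of_inj_on_of_card_le
    (s := I) (t := Finset.range PS.length) (fun x _ => pidx PS x)
    (fun x hx => Finset.mem_range.2 (pidx_lt hin (hI.1 hx)))
    (fun x y hx hy hxy => pidx_inj hin hI.2.1 hI.1 hx hy hxy)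
    (by rw [Finset.card_range, hcard]) s (Finset.mem_range.2 hs)
  obtain ⟨x, hxI, hx⟩ := hsurj
  have hx' : s = pidx PS x := hx
  obtain ⟨q', hq', hxq'⟩ := pidx_spec hin (hI.1 hxI)
  rw [← hx', hq] at hq'
  obtain rfl : q = q' := by injection hq'
  exact ⟨x, hxI, hxq'⟩


lemma extract {a : ℕ → ℕ} {n : ℕ} {I : Finset ℕ} {i j : ℕ} (hF : Feasible a I)
    (hsub : I ⊆ Finset.Icc 1 n) (hjIcc : j ∈ Finset.Icc 1 n)
    (hinj : ∀ x ∈ Finset.Icc 1 n, ∀ y ∈ Finset.Icc 1 n, a x = a y → x = y)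
    (h : ¬ Feasible a (insert j (I \ {i}))) :
    ∃ k ∈ I, k ≠ i ∧ ((k < j ∧ a j < a k) ∨ (j < k ∧ a k < a j)) := by
  simp only [Feasible] at h
  push_neg at h
  obtain ⟨x, hx, y, hy, hxy, hne⟩ := h
  have hne' := hne
  rcases Finset.mem_insert.1 hx with hxj | hx'
  · rcases Finset.mem_insert.1 hy with hyj | hy'
    · rw [hxj, hyj] at hxy; exact absurd hxy (lt_irrefl _)
    · obtain ⟨hyI, hyi⟩ := Finset.mem_sdiff.1 hy'
      rw [hxj] at hxy hne'
      have hyj : y ≠ j := fun he => absurd he.symm (ne_of_lt hxy)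
      have hvne : a y ≠ a j := fun he =>
        absurd (hinj y (hsub hyI) j hjIcc he) hyj
      exact ⟨y, hyI, Finset.notMem_singleton.1 hyi,
        Or.inr ⟨hxy, lt_of_le_of_ne hne' hvne⟩⟩
  · obtain ⟨hxI, hxi⟩ := Finset.mem_sdiff.1 hx'
    rcases Finset.mem_insert.1 hy with hyj | hy'
    · rw [hyj] at hxy hne'
      have hxj : x ≠ j := ne_of_lt hxy
      have hvne : a j ≠ a x := fun he =>
        absurd (hinj j hjIcc x (hsub hxI) he) (fun h2 => hxj h2.symm)
      exact ⟨x, hxI, Finset.notMem_singleton.1 hxi,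
        Or.inl ⟨hxy, lt_of_le_of_ne hne' hvne⟩⟩
    · obtain ⟨hyI, _⟩ := Finset.mem_sdiff.1 hy'
      exact absurd (hF x hxI y hyI hxy) (not_lt.2 hne)

lemma mixed_symm {I J : Finset ℕ} {q : List ℕ} (h : MixedPile I J q) : MixedPile J I q := by
  obtain ⟨hl, x, y, hne, hx, hy, hxI, hyJ⟩ := h
  exact ⟨hl, y, x, hne.symm, hy, hx, hyJ, hxI⟩

lemma hfp_symm {a : ℕ → ℕ} {n : ℕ} {I J : Finset ℕ}
    (h : HasForbiddenPair a n J I) : HasForbiddenPair a n I J := by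
  obtain ⟨t, t', hne, p, p', hp, hp', x, y, x', y',
    ⟨h1, h2, h3, h4, h5, h6⟩, ⟨g1, g2, g3, g4, g5, g6⟩,
    hxx', hyy', e1, e2, e3, e4, ne1, ne2⟩ := h
  exact ⟨t, t', hne, p, p', hp, hp', y, x, y', x',
    ⟨Ne.symm h1, h3, h2, h5, h4, h6⟩,
    ⟨Ne.symm g1, g3, g2, g5, g4, g6⟩,
    hyy', hxx', e1.symm, e4.symm, e3.symm, e2.symm, ne2, ne1⟩

theorem main_aux (n : ℕ) (a : ℕ → ℕ) (hn : 0 < n)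
    (hinj : ∀ i ∈ Finset.Icc 1 n, ∀ j ∈ Finset.Icc 1 n, a i = a j → i = j)
    (hbip : (permGraph a n).Colorable 2)
    (I J : Finset ℕ) (hI : MaxFeasibleIcc a n I) (hJ : MaxFeasibleIcc a n J)
    (hnofp : ¬ HasForbiddenPair a n I J)
    (t : ℕ) (p : List ℕ)
    (hp : (pilesOf a ((List.range n).map (· + 1)))[t]? = some p)
    (hmix : MixedPile I J p)
    (hleft : ∀ s < t, ∀ q : List ℕ,
      (pilesOf a ((List.range n).map (· + 1)))[s]? = some q →
        ¬ MixedPile I J q)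
    (i j : ℕ) (hij : i ≠ j) (hi : i ∈ p) (hj : j ∈ p)
    (hiI : i ∈ I) (hjJ : j ∈ J) (hlt : i < j) :
    Feasible a (insert j (I \ {i})) ∨ Feasible a (insert i (J \ {j})) := by
  have hin : Inv a n (pilesOf a ((List.range n).map (· + 1))) :=
    inv_pilesOf a n hinj n le_rfl
  set PS := pilesOf a ((List.range n).map (· + 1)) with hPSdef
  have hIf := hI.2.1
  have hJf := hJ.2.1
  have hiIcc : i ∈ Finset.Icc 1 n := hI.1 hiI
  have hjIcc : j ∈ Finset.Icc 1 n := hJ.1 hjJ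
  have hpPS : p ∈ PS := List.mem_of_getElem? hp
  have haji : a j < a i := by
    rcases pile_adj hin hpPS hi hj hij with ⟨_, h⟩ | ⟨h, _⟩
    · exact h
    · omega
  -- non-adjacency within a feasible set
  have nadjI : ∀ x ∈ I, ∀ y ∈ I, ¬ (permGraph a n).Adj x y := by
    intro x hx y hy hadj
    obtain ⟨_, _, hd⟩ := hadj
    rcases hd with ⟨h1, h2⟩ | ⟨h1, h2⟩
    · exact absurd (hIf x hx y hy h1) (lt_asymm h2)
    · exact absurd (hIf y hy x hx h1) (lt_asymm h2)
  have nadjJ : ∀ x ∈ J, ∀ y ∈ J, ¬ (permGraph a n).Adj x y := by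
    intro x hx y hy hadj
    obtain ⟨_, _, hd⟩ := hadj
    rcases hd with ⟨h1, h2⟩ | ⟨h1, h2⟩
    · exact absurd (hJf x hx y hy h1) (lt_asymm h2)
    · exact absurd (hJf y hy x hx h1) (lt_asymm h2)
  have hdp : ∀ {s1 s2 : ℕ} {q1 q2 : List ℕ} {x y : ℕ},
      PS[s1]? = some q1 → PS[s2]? = some q2 → s1 ≠ s2 →
      x ∈ q1 → y ∈ q2 → x ≠ y := by
    intro s1 s2 q1 q2 x y hh1 hh2 hne hx hy heq
    subst heq
    exact hne (pile_unique hin hh1 hh2 hx hy)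
  by_contra hcon
  push_neg at hcon
  obtain ⟨hc1, hc2⟩ := hcon
  obtain ⟨k, hkI, hki, hkconf⟩ := extract hIf hI.1 hjIcc hinj hc1
  obtain ⟨l₀, hlJ, hlj, hlconf⟩ := extract hJf hJ.1 hiIcc hinj hc2
  have hkIcc : k ∈ Finset.Icc 1 n := hI.1 hkI
  have hlIcc : l₀ ∈ Finset.Icc 1 n := hJ.1 hlJ
  obtain ⟨sk, qk, hqk, hkqk⟩ := exists_pile hin hkIcc
  obtain ⟨sl, ql, hql, hlql⟩ := exists_pile hin hlIcc
  have hkJ : k ∉ J := by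
    intro hkJ
    rcases hkconf with ⟨h1, h2⟩ | ⟨h1, h2⟩
    · exact absurd (hJf k hkJ j hjJ h1) (lt_asymm h2)
    · exact absurd (hJf j hjJ k hkJ h1) (lt_asymm h2)
  have hlI : l₀ ∉ I := by
    intro hlI
    rcases hlconf with ⟨h1, h2⟩ | ⟨h1, h2⟩
    · exact absurd (hIf l₀ hlI i hiI h1) (lt_asymm h2)
    · exact absurd (hIf i hiI l₀ hlI h1) (lt_asymm h2)
  -- the pile of k is strictly to the right of pile t
  have htsk : t < sk := by
    rcases Nat.lt_trichotomy sk t with hlt' | heq | hgt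
    · exfalso
      obtain ⟨y, hyJ, hyqk⟩ := exists_in_pile hn hin hJ hqk
      by_cases hyk : y = k
      · exact hkJ (hyk ▸ hyJ)
      · exact hleft sk hlt' qk hqk
          ⟨two_mem_len hbip hin (List.mem_of_getElem? hqk) hkqk hyqk (fun he => hyk he.symm),
           k, y, (fun he => hyk he.symm), hkqk, hyqk, hkI, hyJ⟩
    · exfalso
      rw [heq, hp] at hqk
      obtain rfl : p = qk := by injection hqk
      rcases pile_adj hin hpPS hkqk hi hki with ⟨h1, h2⟩ | ⟨h1, h2⟩
      · exact absurd (hIf k hkI i hiI h1) (lt_asymm h2)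
      · exact absurd (hIf i hiI k hkI h1) (lt_asymm h2)
    · exact hgt
  have htsl : t < sl := by
    rcases Nat.lt_trichotomy sl t with hlt' | heq | hgt
    · exfalso
      obtain ⟨x, hxI, hxql⟩ := exists_in_pile hn hin hI hql
      by_cases hxl : x = l₀
      · exact hlI (hxl ▸ hxI)
      · exact hleft sl hlt' ql hql
          ⟨two_mem_len hbip hin (List.mem_of_getElem? hql) hxql hlql hxl,
           x, l₀, hxl, hxql, hlql, hxI, hlJ⟩
    · exfalso
      rw [heq, hp] at hql
      obtain rfl : p = ql := by injection hql
      rcases pile_adj hin hpPS hlql hj hlj with ⟨h1, h2⟩ | ⟨h1, h2⟩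
      · exact absurd (hJf l₀ hlJ j hjJ h1) (lt_asymm h2)
      · exact absurd (hJf j hjJ l₀ hlJ h1) (lt_asymm h2)
    · exact hgt
  -- pin down the position of k
  obtain ⟨z, hzp, hzk, hazk⟩ := pairwise_get? hin.2.2.2.2.2.2 hp hqk htsk k hkqk
  have hz' := mem_pair hmix.1 hij hi hj z hzp
  have hkfacts : i < k ∧ k < j ∧ a i < a k := by
    rcases hkconf with ⟨h1, h2⟩ | ⟨h1, h2⟩
    · rcases hz' with hzi | hzj
      · rw [hzi] at hzk hazk
        exact ⟨hzk, h1, hazk⟩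
      · rw [hzj] at hzk
        omega
    · rcases hz' with hzi | hzj
      · rw [hzi] at hazk
        exact absurd (lt_trans hazk (lt_trans h2 haji)) (lt_irrefl _)
      · rw [hzj] at hazk
        exact absurd (lt_trans hazk h2) (lt_irrefl _)
  obtain ⟨hik1, hkj, haik⟩ := hkfacts
  have hajk : a j < a k := lt_trans haji haik
  -- pin down the position of l₀
  obtain ⟨z2, hz2p, hz2l, haz2l⟩ := pairwise_get? hin.2.2.2.2.2.2 hp hql htsl l₀ hlql
  have hz2' := mem_pair hmix.1 hij hi hj z2 hz2p
  have hlfacts : j < l₀ ∧ a l₀ < a i ∧ a j < a l₀ := by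
    rcases hlconf with ⟨h1, h2⟩ | ⟨h1, h2⟩
    · rcases hz2' with hzi | hzj
      · rw [hzi] at hz2l; omega
      · rw [hzj] at hz2l; omega
    · rcases hz2' with hzi | hzj
      · rw [hzi] at haz2l
        exact absurd (lt_trans haz2l h2) (lt_irrefl _)
      · rw [hzj] at hz2l haz2l
        exact ⟨hz2l, h2, haz2l⟩
  obtain ⟨hjl, hali, hajl⟩ := hlfacts
  by_cases hsksl : sk = sl
  · -- k and l₀ are in the same pile: forbidden pair (t, sk)
    rw [hsksl, hql] at hqk
    obtain rfl : ql = qk := by injection hqk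
    have hkl : k ≠ l₀ := by omega
    exact hnofp ⟨t, sl, by omega, p, ql, hp, hql, i, j, k, l₀,
      ⟨hij, hi, hj, hiI, hjJ, hmix.1⟩,
      ⟨hkl, hkqk, hlql, hkI, hlJ,
        two_mem_len hbip hin (List.mem_of_getElem? hql) hkqk hlql hkl⟩,
      (by omega : i ≠ k), (by omega : j ≠ l₀),
      permGraph_adj.2 ⟨hiIcc, hjIcc, Or.inl ⟨hlt, haji⟩⟩,
      permGraph_adj.2 ⟨hjIcc, hkIcc, Or.inr ⟨hkj, hajk⟩⟩,
      permGraph_adj.2 ⟨hkIcc, hlIcc, Or.inl ⟨by omega, lt_trans hali haik⟩⟩,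
      permGraph_adj.2 ⟨hlIcc, hiIcc, Or.inr ⟨by omega, hali⟩⟩,
      nadjI i hiI k hkI, nadjJ j hjJ l₀ hlJ⟩
  -- piles of k and l₀ are distinct
  obtain ⟨k', hk'J, hk'qk⟩ := exists_in_pile hn hin hJ hqk
  have hk'k : k' ≠ k := fun he => hkJ (he ▸ hk'J)
  obtain ⟨l', hl'I, hl'ql⟩ := exists_in_pile hn hin hI hql
  have hl'l : l' ≠ l₀ := fun he => hlI (he ▸ hl'I)
  have hk'Icc : k' ∈ Finset.Icc 1 n := hJ.1 hk'J
  have hl'Icc : l' ∈ Finset.Icc 1 n := hI.1 hl'I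
  have hk'j : k' ≠ j := hdp hqk hp (by omega) hk'qk hj
  have hk'i : k' ≠ i := hdp hqk hp (by omega) hk'qk hi
  have hk'l : k' ≠ l₀ := hdp hqk hql hsksl hk'qk hlql
  have hl'i : l' ≠ i := hdp hql hp (by omega) hl'ql hi
  have hl'j : l' ≠ j := hdp hql hp (by omega) hl'ql hj
  have hl'k : l' ≠ k := hdp hql hqk (Ne.symm hsksl) hl'ql hkqk
  have hlen2k := two_mem_len hbip hin (List.mem_of_getElem? hqk) hkqk hk'qk (Ne.symm hk'k)
  have hlen2l := two_mem_len hbip hin (List.mem_of_getElem? hql) hl'ql hlql hl'l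
  -- orientation of k' within its pile: k' lies above k
  have hkk' : k < k' ∧ a k' < a k := by
    rcases pile_adj hin (List.mem_of_getElem? hqk) hkqk hk'qk (Ne.symm hk'k) with h | h
    · exact h
    · exfalso
      have h1 : k' < j := by omega
      have h2 := hJf k' hk'J j hjJ h1
      exact absurd (lt_trans hajk h.2) (lt_asymm h2)
  obtain ⟨hkk'1, hak'k⟩ := hkk'
  have hne_ik' : a i ≠ a k' :=
    fun he => (Ne.symm hk'i) (hinj i hiIcc k' hk'Icc he)
  rcases lt_or_gt_of_ne hne_ik' with haik' | hak'i
  · -- a i < a k' : continue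
    have hlk' : l₀ < k' := by
      rcases lt_or_gt_of_ne hk'l with h | h
      · exfalso
        have h2 := hJf k' hk'J l₀ hlJ h
        exact absurd (lt_trans hali haik') (lt_asymm h2)
      · exact h
    have hl'facts : l' < l₀ ∧ a l₀ < a l' := by
      rcases pile_adj hin (List.mem_of_getElem? hql) hlql hl'ql (Ne.symm hl'l) with h | h
      · exfalso
        have h1 : i < l' := by omega
        have h2 := hIf i hiI l' hl'I h1
        exact absurd (lt_trans h.2 hali) (lt_asymm h2)
      · exact h
    obtain ⟨hl'1, hal'⟩ := hl'facts
    have hjl' : j < l' := by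
      rcases Nat.lt_trichotomy j l' with h | h | h
      · exact h
      · exact absurd h.symm hl'j
      · exfalso
        have hajl' : a j < a l' := lt_trans hajl hal'
        exact hnofp ⟨t, sl, by omega, p, ql, hp, hql, i, j, l', l₀,
          ⟨hij, hi, hj, hiI, hjJ, hmix.1⟩,
          ⟨hl'l, hl'ql, hlql, hl'I, hlJ, hlen2l⟩,
          Ne.symm hl'i, (by omega : j ≠ l₀),
          permGraph_adj.2 ⟨hiIcc, hjIcc, Or.inl ⟨hlt, haji⟩⟩,
          permGraph_adj.2 ⟨hjIcc, hl'Icc, Or.inr ⟨h, hajl'⟩⟩,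
          permGraph_adj.2 ⟨hl'Icc, hlIcc, Or.inl ⟨hl'1, hal'⟩⟩,
          permGraph_adj.2 ⟨hlIcc, hiIcc, Or.inr ⟨by omega, hali⟩⟩,
          nadjI i hiI l' hl'I, nadjJ j hjJ l₀ hlJ⟩
    have hakl' : a k < a l' := hIf k hkI l' hl'I (by omega)
    exact hnofp ⟨sk, sl, hsksl, qk, ql, hqk, hql, k, k', l', l₀,
      ⟨Ne.symm hk'k, hkqk, hk'qk, hkI, hk'J, hlen2k⟩,
      ⟨hl'l, hl'ql, hlql, hl'I, hlJ, hlen2l⟩,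
      Ne.symm hl'k, hk'l,
      permGraph_adj.2 ⟨hkIcc, hk'Icc, Or.inl ⟨hkk'1, hak'k⟩⟩,
      permGraph_adj.2 ⟨hk'Icc, hl'Icc, Or.inr ⟨by omega, lt_trans hak'k hakl'⟩⟩,
      permGraph_adj.2 ⟨hl'Icc, hlIcc, Or.inl ⟨hl'1, hal'⟩⟩,
      permGraph_adj.2 ⟨hlIcc, hkIcc, Or.inr ⟨by omega, lt_trans hali haik⟩⟩,
      nadjI k hkI l' hl'I, nadjJ k' hk'J l₀ hlJ⟩
  · -- a k' < a i : forbidden pair (t, sk)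
    exact hnofp ⟨t, sk, by omega, p, qk, hp, hqk, i, j, k, k',
      ⟨hij, hi, hj, hiI, hjJ, hmix.1⟩,
      ⟨Ne.symm hk'k, hkqk, hk'qk, hkI, hk'J, hlen2k⟩,
      (by omega : i ≠ k), Ne.symm hk'j,
      permGraph_adj.2 ⟨hiIcc, hjIcc, Or.inl ⟨hlt, haji⟩⟩,
      permGraph_adj.2 ⟨hjIcc, hkIcc, Or.inr ⟨hkj, hajk⟩⟩,
      permGraph_adj.2 ⟨hkIcc, hk'Icc, Or.inl ⟨hkk'1, hak'k⟩⟩,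
      permGraph_adj.2 ⟨hk'Icc, hiIcc, Or.inr ⟨by omega, hak'i⟩⟩,
      nadjI i hiI k hkI, nadjJ j hjJ k' hk'J⟩

end Stmt14Aux

/-- Let `a₁, …, aₙ` be distinct integers between `1` and `n` whose permutation
graph is bipartite, and let `I`, `J` be maximum feasible sets such that the
instance `(A, I, J)` has no forbidden pair.  If `a i` and `a j` are the two
elements of the leftmost mixed pile, with `i ∈ I` and `j ∈ J`, then at least
one of `(I \ {i}) ∪ {j}` and `(J \ {j}) ∪ {i}` is a feasible set. -/
theorem stmt14 (n : ℕ) (a : ℕ → ℕ) (hn : 0 < n)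
    (hmem : ∀ i ∈ Finset.Icc 1 n, a i ∈ Finset.Icc 1 n)
    (hinj : ∀ i ∈ Finset.Icc 1 n, ∀ j ∈ Finset.Icc 1 n, a i = a j → i = j)
    (hbip : (permGraph a n).Colorable 2)
    (I J : Finset ℕ) (hI : MaxFeasibleIcc a n I) (hJ : MaxFeasibleIcc a n J)
    (hnofp : ¬ HasForbiddenPair a n I J)
    (t : ℕ) (p : List ℕ)
    (hp : (pilesOf a ((List.range n).map (· + 1)))[t]? = some p)
    (hmix : MixedPile I J p)
    (hleft : ∀ s < t, ∀ q : List ℕ,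
      (pilesOf a ((List.range n).map (· + 1)))[s]? = some q →
        ¬ MixedPile I J q)
    (i j : ℕ) (hij : i ≠ j) (hi : i ∈ p) (hj : j ∈ p)
    (hiI : i ∈ I) (hjJ : j ∈ J) :
    Feasible a (insert j (I \ {i})) ∨ Feasible a (insert i (J \ {j})) := by
  rcases Nat.lt_trichotomy i j with h | h | h
  · exact Stmt14Aux.main_aux n a hn hinj hbip I J hI hJ hnofp t p hp hmix hleft
      i j hij hi hj hiI hjJ h
  · exact absurd h hij
  · have := Stmt14Aux.main_aux n a hn hinj hbip J I hJ hI
      (fun hf => hnofp (Stmt14Aux.hfp_symm hf)) t p hp (Stmt14Aux.mixed_symm hmix)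
      (fun s hs q hq hm => hleft s hs q hq (Stmt14Aux.mixed_symm hm))
      j i (Ne.symm hij) hj hi hjJ hiI h
    exact this.symm
end

section
/- Let A be a sequence of n distinct integers between 1 and n whose permutation graph G_A is bipartite, and let I and J be maximum feasible sets for A. If the instance (A, I, J) has a forbidden pair, then there is no reconfiguration sequence between I and J. -/
/-- The invariant of the pile structure. -/
def Good (a : ℕ → ℕ) (ps : List (List ℕ)) : Prop :=
  (∀ p ∈ ps, p ≠ []) ∧
  (∀ p ∈ ps, p.Chain' (fun x y => y < x ∧ a x < a y)) ∧
  (∀ t p q, ps[t]? = some p → ps[t+1]? = some q →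
    ∀ x ∈ q, ∃ y ∈ p, y < x ∧ a y < a x)

lemma place_flatten (a : ℕ → ℕ) (i : ℕ) :
    ∀ ps : List (List ℕ), (place a ps i).flatten.Perm (i :: ps.flatten) := by
  intro ps
  induction ps with
  | nil => simp [place]
  | cons p ps ih =>
    by_cases h : a i < a p.headI
    · simp [place, h]
    · simp only [place, if_neg h, List.flatten_cons]
      exact (ih.append_left p).trans List.perm_middle

lemma good_place (a : ℕ → ℕ) (i : ℕ) :
    ∀ ps : List (List ℕ), Good a ps →
    (∀ x ∈ ps.flatten, x < i ∧ a x ≠ a i) → Good a (place a ps i) := by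
  intro ps
  induction ps with
  | nil =>
    intro _ _
    refine ⟨?_, ?_, ?_⟩
    · simp [place]
    · simp [place]; exact List.isChain_singleton _
    · intro t p q hp hq
      simp only [place] at hp hq
      rcases t with _ | t <;> simp_all
  | cons p ps ih =>
    intro hG hlt
    obtain ⟨hne, hch, hlad⟩ := hG
    have hpne : p ≠ [] := hne p (by simp)
    obtain ⟨ph, pt, hpd⟩ := List.exists_cons_of_ne_nil hpne
    have hph : p.headI ∈ p := by subst hpd; simp
    by_cases h : a i < a p.headI
    · simp only [place, if_pos h]
      refine ⟨?_, ?_, ?_⟩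
      · intro q hq
        rcases List.mem_cons.1 hq with rfl | hq
        · simp
        · exact hne q (by simp [hq])
      · intro q hq
        rcases List.mem_cons.1 hq with rfl | hq
        · subst hpd
          refine List.isChain_cons_cons.2 ⟨⟨?_, ?_⟩, hch _ (by simp)⟩
          · exact (hlt ph (by simp)).1
          · simpa using h
        · exact hch q (by simp [hq])
      · intro t q r hq hr x hx
        rcases t with _ | t
        · simp only [List.getElem?_cons_zero, List.getElem?_cons_succ] at hq hr
          cases hq
          obtain ⟨y, hy, h1, h2⟩ := hlad 0 p r rfl hr x hx
          exact ⟨y, by simp [hy], h1, h2⟩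
        · exact hlad (t+1) q r hq hr x hx
    · simp only [place, if_neg h]
      have hGps : Good a ps := by
        refine ⟨fun q hq => hne q (by simp [hq]), fun q hq => hch q (by simp [hq]), ?_⟩
        intro t q r hq hr x hx
        exact hlad (t+1) q r hq hr x hx
      have hltps : ∀ x ∈ ps.flatten, x < i ∧ a x ≠ a i := by
        intro x hx; exact hlt x (by simp [hx])
      have hGr := ih hGps hltps
      obtain ⟨hne', hch', hlad'⟩ := hGr
      have hheadlt : p.headI < i ∧ a p.headI < a i := by
        have h1 := hlt p.headI (by simp [hph])
        exact ⟨h1.1, by omega⟩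
      refine ⟨?_, ?_, ?_⟩
      · intro q hq
        rcases List.mem_cons.1 hq with h' | hq
        · rw [h']; exact hpne
        · exact hne' q hq
      · intro q hq
        rcases List.mem_cons.1 hq with h' | hq
        · rw [h']; exact hch p (by simp)
        · exact hch' q hq
      · intro t q r hq hr x hx
        rcases t with _ | t
        · -- q = p, r = head of place a ps i
          simp only [List.getElem?_cons_zero, List.getElem?_cons_succ] at hq hr
          cases hq
          have hhead : x = i ∨ ∃ q0, ps[0]? = some q0 ∧ x ∈ q0 := by
            cases ps with
            | nil =>
              simp only [place, List.getElem?_cons_zero, List.getElem?_cons_succ] at hr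
              cases hr; left; simpa using hx
            | cons q0 qs =>
              by_cases h0 : a i < a q0.headI
              · simp only [place, if_pos h0, List.getElem?_cons_zero, List.getElem?_cons_succ] at hr
                obtain rfl : r = i :: q0 := (Option.some.inj hr).symm
                rcases List.mem_cons.1 hx with h' | hx'
                · left; exact h'
                · right; exact ⟨q0, rfl, hx'⟩
              · simp only [place, if_neg h0, List.getElem?_cons_zero, List.getElem?_cons_succ] at hr
                have h' : q0 = r := Option.some.inj hr
                subst h'
                right; exact ⟨q0, rfl, hx⟩
          rcases hhead with rfl | ⟨q0, hq0, hxq0⟩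
          · exact ⟨p.headI, hph, hheadlt.1, hheadlt.2⟩
          · exact hlad 0 p q0 rfl (by simpa using hq0) x hxq0
        · exact hlad' t q r hq hr x hx

lemma pilesOf_spec (a : ℕ → ℕ) :
    ∀ (l : List ℕ) (ps : List (List ℕ)),
    Good a ps →
    (∀ x ∈ ps.flatten, ∀ y ∈ l, x < y ∧ a x ≠ a y) →
    l.Pairwise (fun x y => x < y ∧ a x ≠ a y) →
    Good a (l.foldl (place a) ps) ∧
      (l.foldl (place a) ps).flatten.Perm (ps.flatten ++ l) := by
  intro l
  induction l with
  | nil => intro ps hG _ _; exact ⟨hG, by simp⟩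
  | cons i l ih =>
    intro ps hG hlt hpw
    have hG' : Good a (place a ps i) :=
      good_place a i ps hG (fun x hx => hlt x hx i (by simp))
    have hperm := place_flatten a i ps
    have hmem : ∀ x ∈ (place a ps i).flatten, x = i ∨ x ∈ ps.flatten := by
      intro x hx
      have := hperm.mem_iff.1 hx
      simpa using this
    have hlt' : ∀ x ∈ (place a ps i).flatten, ∀ y ∈ l, x < y ∧ a x ≠ a y := by
      intro x hx y hy
      rcases hmem x hx with rfl | hx'
      · exact (List.pairwise_cons.1 hpw).1 y hy
      · exact hlt x hx' y (by simp [hy])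
    have hpw' : l.Pairwise (fun x y => x < y ∧ a x ≠ a y) :=
      (List.pairwise_cons.1 hpw).2
    obtain ⟨hG2, hp2⟩ := ih (place a ps i) hG' hlt' hpw'
    refine ⟨hG2, ?_⟩
    show (l.foldl (place a) (place a ps i)).flatten.Perm _
    exact hp2.trans ((hperm.append_right l).trans List.perm_middle.symm)

lemma exists_chain (a : ℕ → ℕ) (ps : List (List ℕ)) (hG : Good a ps) :
    ∀ t p, ps[t]? = some p → ∀ x ∈ p,
    ∃ K : Finset ℕ, Feasible a K ∧ K.card = t + 1 ∧
      (∀ z ∈ K, z ∈ ps.flatten) ∧ (∀ z ∈ K, z ≤ x ∧ a z ≤ a x) := by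
  intro t
  induction t with
  | zero =>
    intro p hp x hx
    refine ⟨{x}, ?_, by simp, ?_, by simp⟩
    · intro i hi j hj hij
      simp only [Finset.mem_singleton] at hi hj; omega
    · intro z hz
      simp only [Finset.mem_singleton] at hz
      subst hz
      exact List.mem_flatten.2 ⟨p, List.mem_of_getElem? hp, hx⟩
  | succ t iht =>
    intro p hp x hx
    have hlen : t < ps.length := by
      obtain ⟨h, -⟩ := List.getElem?_eq_some_iff.1 hp
      omega
    obtain ⟨q, hq⟩ : ∃ q, ps[t]? = some q :=
      ⟨ps[t], List.getElem?_eq_getElem hlen⟩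
    obtain ⟨y, hy, hyx, hayx⟩ := hG.2.2 t q p hq hp x hx
    obtain ⟨K, hKf, hKc, hKm, hKb⟩ := iht q hq y hy
    have hxK : x ∉ K := fun h => absurd ((hKb x h).1) (by omega)
    refine ⟨insert x K, ?_, ?_, ?_, ?_⟩
    · intro i hi j hj hij
      rcases Finset.mem_insert.1 hi with rfl | hi' <;>
        rcases Finset.mem_insert.1 hj with rfl | hj'
      · omega
      · exact absurd ((hKb j hj').1) (by omega)
      · have := hKb i hi'; omega
      · exact hKf i hi' j hj' hij
    · rw [Finset.card_insert_of_notMem hxK, hKc]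
    · intro z hz
      rcases Finset.mem_insert.1 hz with rfl | hz'
      · exact List.mem_flatten.2 ⟨p, List.mem_of_getElem? hp, hx⟩
      · exact hKm z hz'
    · intro z hz
      rcases Finset.mem_insert.1 hz with rfl | hz'
      · omega
      · have := hKb z hz'; omega

/-- Two distinct elements of a single pile conflict. -/
lemma pile_conflict (a : ℕ → ℕ) (p : List ℕ)
    (hch : p.Chain' (fun x y => y < x ∧ a x < a y))
    (K : Finset ℕ) (hK : Feasible a K) {x y : ℕ} (hx : x ∈ p) (hy : y ∈ p)
    (hxy : x ≠ y) : ¬(x ∈ K ∧ y ∈ K) := by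
  haveI : IsTrans ℕ (fun x y => y < x ∧ a x < a y) :=
    ⟨fun x y z h1 h2 => ⟨by omega, by omega⟩⟩
  have hpw : p.Pairwise (fun x y => y < x ∧ a x < a y) :=
    List.isChain_iff_pairwise.1 hch
  have hpw' : p.Pairwise (fun x y => (y < x ∧ a x < a y) ∨ (x < y ∧ a y < a x)) :=
    hpw.imp (fun h => Or.inl h)
  have hsym : Symmetric (fun x y => (y < x ∧ a x < a y) ∨ (x < y ∧ a y < a x)) := by
    intro x y h; tauto
  have := (haveI : Std.Symm (fun x y => (y < x ∧ a x < a y) ∨ (x < y ∧ a y < a x)) := ⟨fun _ _ h => hsym h⟩; hpw'.forall hx hy hxy)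
  rintro ⟨hxK, hyK⟩
  rcases this with ⟨h1, h2⟩ | ⟨h1, h2⟩
  · have := hK y hyK x hxK h1; omega
  · have := hK x hxK y hyK h1; omega

lemma card_le_piles (a : ℕ → ℕ) :
    ∀ (ps : List (List ℕ)) (K : Finset ℕ),
    Feasible a K → (∀ p ∈ ps, p.Chain' (fun x y => y < x ∧ a x < a y)) →
    (∀ z ∈ K, z ∈ ps.flatten) → K.card ≤ ps.length := by
  intro ps
  induction ps with
  | nil => intro K _ _ hm; simp [Finset.card_eq_zero.2 (Finset.eq_empty_of_forall_notMem (by simpa using hm))]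
  | cons p rest ih =>
    intro K hKf hch hm
    have h1 : (K ∩ p.toFinset).card ≤ 1 := by
      refine Finset.card_le_one.2 ?_
      intro x hx y hy
      by_contra hxy
      exact pile_conflict a p (hch p (by simp)) K hKf
        (List.mem_toFinset.1 (Finset.mem_inter.1 hx).2)
        (List.mem_toFinset.1 (Finset.mem_inter.1 hy).2) hxy
        ⟨(Finset.mem_inter.1 hx).1, (Finset.mem_inter.1 hy).1⟩
    have h2 : (K \ p.toFinset).card ≤ rest.length := by
      refine ih (K \ p.toFinset) ?_ (fun q hq => hch q (by simp [hq])) ?_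
      · intro i hi j hj hij
        exact hKf i (Finset.mem_sdiff.1 hi).1 j (Finset.mem_sdiff.1 hj).1 hij
      · intro z hz
        obtain ⟨hzK, hzp⟩ := Finset.mem_sdiff.1 hz
        have := hm z hzK
        simp only [List.flatten_cons, List.mem_append] at this
        rcases this with h | h
        · exact absurd (List.mem_toFinset.2 h) hzp
        · exact h
    have := Finset.card_inter_add_card_sdiff K p.toFinset
    simp only [List.length_cons]
    omega

lemma card_lt_of_missed (a : ℕ → ℕ) :
    ∀ (ps : List (List ℕ)) (K : Finset ℕ) (t : ℕ) (p : List ℕ),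
    Feasible a K → (∀ p ∈ ps, p.Chain' (fun x y => y < x ∧ a x < a y)) →
    (∀ z ∈ K, z ∈ ps.flatten) → ps[t]? = some p → (∀ z ∈ p, z ∉ K) →
    K.card + 1 ≤ ps.length := by
  intro ps
  induction ps with
  | nil => intro K t p _ _ _ hp _; simp at hp
  | cons q rest ih =>
    intro K t p hKf hch hm hp hmiss
    rcases t with _ | t
    · -- p = q, missed
      simp only [List.getElem?_cons_zero, List.getElem?_cons_succ] at hp
      obtain rfl : q = p := Option.some.inj hp
      have hm' : ∀ z ∈ K, z ∈ rest.flatten := by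
        intro z hz
        have := hm z hz
        simp only [List.flatten_cons, List.mem_append] at this
        rcases this with h | h
        · exact absurd hz (hmiss z h)
        · exact h
      have := card_le_piles a rest K hKf (fun r hr => hch r (by simp [hr])) hm'
      simp only [List.length_cons]; omega
    · have h1 : (K ∩ q.toFinset).card ≤ 1 := by
        refine Finset.card_le_one.2 ?_
        intro x hx y hy
        by_contra hxy
        exact pile_conflict a q (hch q (by simp)) K hKf
          (List.mem_toFinset.1 (Finset.mem_inter.1 hx).2)
          (List.mem_toFinset.1 (Finset.mem_inter.1 hy).2) hxy
          ⟨(Finset.mem_inter.1 hx).1, (Finset.mem_inter.1 hy).1⟩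
      have h2 : (K \ q.toFinset).card + 1 ≤ rest.length := by
        refine ih (K \ q.toFinset) t p ?_ (fun r hr => hch r (by simp [hr])) ?_ hp ?_
        · intro i hi j hj hij
          exact hKf i (Finset.mem_sdiff.1 hi).1 j (Finset.mem_sdiff.1 hj).1 hij
        · intro z hz
          obtain ⟨hzK, hzp⟩ := Finset.mem_sdiff.1 hz
          have := hm z hzK
          simp only [List.flatten_cons, List.mem_append] at this
          rcases this with h | h
          · exact absurd (List.mem_toFinset.2 h) hzp
          · exact h
        · intro z hz
          simp only [Finset.mem_sdiff, not_and]
          intro hzK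
          exact absurd hzK (hmiss z hz)
      have := Finset.card_inter_add_card_sdiff K q.toFinset
      simp only [List.length_cons]
      omega

lemma mem_pair {p : List ℕ} (h2 : p.length = 2) {i j : ℕ} (hij : i ≠ j)
    (hi : i ∈ p) (hj : j ∈ p) : ∀ x ∈ p, x = i ∨ x = j := by
  match p, h2 with
  | [u, v], _ =>
    simp only [List.mem_cons, List.mem_singleton, List.not_mem_nil, or_false] at hi hj ⊢
    intro x hx
    rcases hi with rfl | rfl <;> rcases hj with rfl | rfl <;> rcases hx with rfl | rfl <;> tauto

lemma adj_conflict {a : ℕ → ℕ} {n : ℕ} {x y : ℕ} {K : Finset ℕ}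
    (hadj : (permGraph a n).Adj x y) (hK : Feasible a K)
    (hx : x ∈ K) (hy : y ∈ K) : False := by
  obtain ⟨-, -, ⟨h1, h2⟩ | ⟨h1, h2⟩⟩ := hadj
  · have := hK x hx y hy h1; omega
  · have := hK y hy x hx h1; omega

/-- Let `a₁, …, aₙ` be distinct integers between `1` and `n` whose permutation
graph is bipartite, and let `I` and `J` be maximum feasible sets.  If the
instance `(A, I, J)` has a forbidden pair, then there is no reconfiguration
sequence between `I` and `J`. -/
theorem stmt15 (n : ℕ) (a : ℕ → ℕ) (hn : 0 < n)
    (hmem : ∀ i ∈ Finset.Icc 1 n, a i ∈ Finset.Icc 1 n)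
    (hinj : ∀ i ∈ Finset.Icc 1 n, ∀ j ∈ Finset.Icc 1 n, a i = a j → i = j)
    (hbip : (permGraph a n).Colorable 2)
    (I J : Finset ℕ) (hI : MaxFeasibleIcc a n I) (hJ : MaxFeasibleIcc a n J)
    (hfp : HasForbiddenPair a n I J) :
    ¬ ∃ ℓ f, ReconSeq a (Finset.Icc 1 n) ℓ f ∧ f 0 = I ∧ f ℓ = J := by
  rintro ⟨ℓ, f, ⟨hfeas, hstep⟩, hf0, hfℓ⟩
  obtain ⟨t, t', htt', p, p', hp, hp', i, j, i', j',
    ⟨hij, hip, hjp, hiI, hjJ, hplen⟩, ⟨hij', hip', hjp', hi'I, hj'J, hplen'⟩,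
    hii', hjj', Aij, Aji', Ai'j', Aj'i, nAii', nAjj'⟩ := hfp
  set L : List ℕ := (List.range n).map (· + 1) with hL
  set ps : List (List ℕ) := pilesOf a L with hps
  -- membership in L
  have hmemL : ∀ x, x ∈ L ↔ x ∈ Finset.Icc 1 n := by
    intro x
    simp only [hL, List.mem_map, List.mem_range, Finset.mem_Icc]
    constructor
    · rintro ⟨k, hk, rfl⟩; omega
    · rintro ⟨h1, h2⟩; exact ⟨x - 1, by omega, by omega⟩
  have hLpw : L.Pairwise (fun x y => x < y ∧ a x ≠ a y) := by
    have h0 : L.Pairwise (· < ·) := by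
      rw [hL]
      exact (List.pairwise_lt_range (n := n)).map _ (fun _ _ h => by omega)
    refine h0.imp_of_mem ?_
    intro x y hx hy hxy
    refine ⟨hxy, fun hax => ?_⟩
    have := hinj x ((hmemL x).1 hx) y ((hmemL y).1 hy) hax
    omega
  have hGnil : Good a [] := ⟨by simp, by simp, by intro t p q hp _; simp at hp⟩
  obtain ⟨hG, hperm⟩ := pilesOf_spec a L [] hGnil (by simp) hLpw
  rw [show L.foldl (place a) [] = ps from rfl] at hG hperm
  have hflat : ∀ x, x ∈ ps.flatten ↔ x ∈ Finset.Icc 1 n := by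
    intro x
    rw [hperm.mem_iff]
    simpa using hmemL x
  -- ps is nonempty and get the number of piles equals max card
  have hlenpos : 0 < ps.length := by
    obtain ⟨h, -⟩ := List.getElem?_eq_some_iff.1 hp
    omega
  have hub : ∀ K : Finset ℕ, K ⊆ Finset.Icc 1 n → Feasible a K → K.card ≤ ps.length := by
    intro K hKs hKf
    exact card_le_piles a ps K hKf hG.2.1 (fun z hz => (hflat z).2 (hKs hz))
  have hlb : ps.length ≤ I.card := by
    set m := ps.length - 1 with hm
    have hmlt : m < ps.length := by omega
    obtain ⟨q, hq⟩ : ∃ q, ps[m]? = some q := ⟨ps[m], List.getElem?_eq_getElem hmlt⟩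
    have hqne : q ≠ [] := hG.1 q (List.mem_of_getElem? hq)
    obtain ⟨x, xs, rfl⟩ := List.exists_cons_of_ne_nil hqne
    obtain ⟨K, hKf, hKc, hKm, -⟩ := exists_chain a ps hG m _ hq x (by simp)
    have hKs : K ⊆ Finset.Icc 1 n := fun z hz => (hflat z).1 (hKm z hz)
    have := hI.2.2 K hKs hKf
    omega
  have hIcard : I.card = ps.length := le_antisymm (hub I hI.1 hI.2.1) hlb
  -- any maximum feasible set contains {i,i'} or {j,j'}
  have sel : ∀ K : Finset ℕ, K ⊆ Finset.Icc 1 n → Feasible a K → K.card = I.card →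
      (i ∈ K ∧ i' ∈ K) ∨ (j ∈ K ∧ j' ∈ K) := by
    intro K hKs hKf hKc
    have hmK : ∀ z ∈ K, z ∈ ps.flatten := fun z hz => (hflat z).2 (hKs hz)
    have hmeet : ∀ (s : ℕ) (q : List ℕ), ps[s]? = some q → ∃ x ∈ q, x ∈ K := by
      intro s q hq
      by_contra hno
      push_neg at hno
      have := card_lt_of_missed a ps K s q hKf hG.2.1 hmK hq hno
      omega
    obtain ⟨x, hxp, hxK⟩ := hmeet t p hp
    obtain ⟨x', hxp', hxK'⟩ := hmeet t' p' hp'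
    have hx : x = i ∨ x = j := mem_pair hplen hij hip hjp x hxp
    have hx' : x' = i' ∨ x' = j' := mem_pair hplen' hij' hip' hjp' x' hxp'
    rcases hx with rfl | rfl <;> rcases hx' with rfl | rfl
    · exact Or.inl ⟨hxK, hxK'⟩
    · exact (adj_conflict Aj'i hKf hxK' hxK).elim
    · exact (adj_conflict Aji' hKf hxK hxK').elim
    · exact Or.inr ⟨hxK, hxK'⟩
  -- cardinalities are preserved along the sequence
  have hcard : ∀ s ≤ ℓ, (f s).card = I.card := by
    intro s hs
    induction s with
    | zero => rw [hf0]
    | succ s ihs =>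
      have hs' : s ≤ ℓ := by omega
      obtain ⟨u, v, hu, hv, heq⟩ := hstep s (by omega)
      have huv : u ≠ v := fun h => hu (h ▸ hv)
      have h1 : (insert u (f s)).card = (f s).card + 1 := Finset.card_insert_of_notMem hu
      have h2 : v ∈ insert u (f s) := Finset.mem_insert_of_mem hv
      have h3 : (insert u (f s) \ {v}).card = (insert u (f s)).card - 1 := by
        rw [Finset.card_sdiff_of_subset (by simpa using h2)]
        simp
      rw [heq, h3, h1, ihs hs']
      omega
  -- the invariant
  have hinv : ∀ s ≤ ℓ, i ∈ f s ∧ i' ∈ f s := by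
    intro s hs
    induction s with
    | zero => rw [hf0]; exact ⟨hiI, hi'I⟩
    | succ s ihs =>
      have hs' : s ≤ ℓ := by omega
      obtain ⟨hi1, hi2⟩ := ihs hs'
      obtain ⟨u, v, hu, hv, heq⟩ := hstep s (by omega)
      have hsel := sel (f (s+1)) (hfeas (s+1) hs).1 (hfeas (s+1) hs).2 (hcard (s+1) hs)
      rcases hsel with h | ⟨hjK, hj'K⟩
      · exact h
      · -- both i and i' would have to be removed in one step
        have hi1' : i ∉ f (s+1) := fun h =>
          adj_conflict Aij (hfeas (s+1) hs).2 h hjK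
        have hi2' : i' ∉ f (s+1) := fun h =>
          adj_conflict Ai'j' (hfeas (s+1) hs).2 h hj'K
        have e1 : i = v := by
          by_contra hne
          exact hi1' (heq ▸ Finset.mem_sdiff.2 ⟨Finset.mem_insert_of_mem hi1, by simpa using hne⟩)
        have e2 : i' = v := by
          by_contra hne
          exact hi2' (heq ▸ Finset.mem_sdiff.2 ⟨Finset.mem_insert_of_mem hi2, by simpa using hne⟩)
        exact absurd (e1.trans e2.symm) hii'
  have hiJ : i ∈ J := hfℓ ▸ (hinv ℓ le_rfl).1
  exact adj_conflict Aij hJ.2.1 hiJ hjJ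
end
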